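/- arXiv:math/0512591 — 3 statements merged into one kernel-verified Lean document; each statement's English description precedes it below -/
import Mathlib

section
/- Let f(x) = p(x²) + x·q(x²) be a real polynomial of positive degree with q(0) ≠ 0, let c = p(0)/q(0), and define p̃(x) = q(x), q̃(x) = (p(x) − c·q(x))/x, and f̃(x) = p̃(x²) + x·q̃(x²). Then f is stable if and only if c > 0 and f̃ is stable. -/
open Polynomial Filter

private lemma prodNonneg (s : Multiset ℂ) (F : ℂ → ℝ) (h : ∀ r ∈ s, 0 ≤ F r) :
    0 ≤ (s.map F).prod := by
  induction s using Multiset.induction with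
  | empty => simp
  | cons a t ih =>
    simp only [Multiset.map_cons, Multiset.prod_cons]
    exact mul_nonneg (h a (Multiset.mem_cons_self a t))
      (ih fun r hr => h r (Multiset.mem_cons_of_mem hr))

private lemma prodLe (s : Multiset ℂ) (F G : ℂ → ℝ)
    (h : ∀ r ∈ s, 0 ≤ G r ∧ G r ≤ F r) :
    (s.map G).prod ≤ (s.map F).prod := by
  induction s using Multiset.induction with
  | empty => simp
  | cons a t ih =>
    simp only [Multiset.map_cons, Multiset.prod_cons]
    have ha := h a (Multiset.mem_cons_self a t)
    have ht : ∀ r ∈ t, 0 ≤ G r ∧ G r ≤ F r := fun r hr => h r (Multiset.mem_cons_of_mem hr)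
    have h1 : 0 ≤ (t.map G).prod := prodNonneg t G fun r hr => (ht r hr).1
    exact mul_le_mul ha.2 (ih ht) h1 (le_trans ha.1 ha.2)

private lemma abs_aeval_eq (h : Polynomial ℝ) (w : ℂ) :
    ‖aeval w h‖ =
      |h.leadingCoeff| * (((h.map (algebraMap ℝ ℂ)).roots).map fun r => ‖w - r‖).prod := by
  set H := h.map (algebraMap ℝ ℂ) with hH
  have hsplit : H.Splits := IsAlgClosed.splits H
  have hfac : H = C H.leadingCoeff * (H.roots.map fun a => X - C a).prod :=
    hsplit.eq_prod_roots
  have hev : aeval w h = eval w H := by rw [hH, eval_map]; rfl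
  have hlc : H.leadingCoeff = algebraMap ℝ ℂ h.leadingCoeff := by
    rw [hH]; exact leadingCoeff_map _
  rw [hev]
  conv_lhs => rw [hfac]
  rw [eval_mul, eval_C, eval_multiset_prod, Multiset.map_map]
  rw [norm_mul, show ∀ s : Multiset ℂ, ‖s.prod‖ = (s.map (‖·‖)).prod from fun s => map_multiset_prod normHom s, Multiset.map_map, hlc]
  simp only [Function.comp, eval_sub, eval_X, eval_C]
  rw [show (algebraMap ℝ ℂ) h.leadingCoeff = (h.leadingCoeff : ℂ) from rfl, Complex.norm_real, Real.norm_eq_abs]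

private lemma keyW (g : Polynomial ℝ) (hg : g ≠ 0)
    (hs : ∀ z : ℂ, aeval z g = 0 → z.re < 0) (z : ℂ) (hz : 0 < z.re) :
    ‖aeval (-z) g‖ ≤ ‖aeval z g‖ := by
  have habs1 : ‖aeval (-z) g‖ = ‖aeval (-(starRingEnd ℂ z)) g‖ := by
    have h1 : (-(starRingEnd ℂ z)) = starRingEnd ℂ (-z) := by rw [map_neg]
    rw [h1, Polynomial.aeval_conj, Complex.norm_conj]
  rw [habs1, abs_aeval_eq, abs_aeval_eq]
  have hGne : g.map (algebraMap ℝ ℂ) ≠ 0 := by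
    simpa using (Polynomial.map_ne_zero hg : g.map (algebraMap ℝ ℂ) ≠ 0)
  refine mul_le_mul_of_nonneg_left (prodLe _ _ _ ?_) (abs_nonneg _)
  intro r hr
  have hroot : aeval r g = 0 := by
    have := (Polynomial.mem_roots hGne).mp hr
    rw [aeval_def, ← eval_map]
    exact this
  have hre : r.re < 0 := hs r hroot
  refine ⟨norm_nonneg _, ?_⟩
  rw [Complex.norm_def, Complex.norm_def]
  apply Real.sqrt_le_sqrt
  simp only [Complex.normSq_apply, Complex.sub_re, Complex.sub_im, Complex.neg_re,
    Complex.neg_im, Complex.conj_re, Complex.conj_im]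
  nlinarith [hz, hre]

private lemma root_bound (h : Polynomial ℝ) (hne : h ≠ 0) (z : ℂ) (hz : aeval z h = 0) :
    ‖z‖ ≤ 1 + (∑ i ∈ Finset.range h.natDegree, |h.coeff i|) / |h.leadingCoeff| := by
  set d := h.natDegree with hd
  set a := h.leadingCoeff with ha
  set S := ∑ i ∈ Finset.range d, |h.coeff i| with hS
  have hane : a ≠ 0 := leadingCoeff_ne_zero.mpr hne
  have hapos : 0 < |a| := abs_pos.mpr hane
  have hSnn : 0 ≤ S := Finset.sum_nonneg fun i _ => abs_nonneg _
  rcases le_or_gt (‖z‖) 1 with h1 | h1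
  · nlinarith [div_nonneg hSnn hapos.le]
  · have hd0 : 0 < d := by
      rcases Nat.eq_zero_or_pos d with h0 | h0
      · exfalso
        have hC : h = C (h.coeff 0) := Polynomial.eq_C_of_natDegree_eq_zero h0
        rw [hC] at hz
        simp only [aeval_C] at hz
        have : h.coeff 0 = 0 := by
          have := congrArg Complex.re hz
          simpa using this
        exact hne (by rw [hC, this, map_zero])
      · exact h0
    have hsum := Polynomial.aeval_eq_sum_range (p := h) z
    rw [hz, ← hd, Finset.sum_range_succ] at hsum
    have heq : (a : ℂ) * z ^ d = -∑ i ∈ Finset.range d, h.coeff i • z ^ i := by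
      have : h.coeff d • z ^ d = (a : ℂ) * z ^ d := by
        rw [Polynomial.coeff_natDegree, ← ha, Complex.real_smul]
      rw [← this]
      linear_combination -hsum
    have habs : |a| * ‖z‖ ^ d ≤ S * ‖z‖ ^ (d - 1) := by
      have h2 : ‖(a : ℂ) * z ^ d‖ = |a| * ‖z‖ ^ d := by
        rw [norm_mul, norm_pow, Complex.norm_real, Real.norm_eq_abs]
      have h3 : ‖(a : ℂ) * z ^ d‖
          ≤ ∑ i ∈ Finset.range d, |h.coeff i| * ‖z‖ ^ i := by
        rw [heq, norm_neg]
        refine le_trans (norm_sum_le _ _) (Finset.sum_le_sum fun i _ => ?_)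
        rw [Complex.real_smul, norm_mul, norm_pow, Complex.norm_real, Real.norm_eq_abs]
      have h4 : ∑ i ∈ Finset.range d, |h.coeff i| * ‖z‖ ^ i
          ≤ ∑ i ∈ Finset.range d, |h.coeff i| * ‖z‖ ^ (d - 1) := by
        refine Finset.sum_le_sum fun i hi => ?_
        have hi' : i ≤ d - 1 := by
          have := Finset.mem_range.mp hi; omega
        exact mul_le_mul_of_nonneg_left (pow_le_pow_right₀ (le_of_lt h1) hi') (abs_nonneg _)
      rw [← Finset.sum_mul] at h4
      rw [← h2]
      exact le_trans h3 h4
    have hB : 0 < ‖z‖ ^ (d - 1) := pow_pos (by linarith) _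
    have hzd : ‖z‖ ^ d = ‖z‖ ^ (d - 1) * ‖z‖ := by
      rw [← pow_succ]
      congr 1
      omega
    rw [hzd] at habs
    have hfin : |a| * ‖z‖ ≤ S := by nlinarith
    have : ‖z‖ ≤ S / |a| := (le_div_iff₀' hapos).mpr hfin
    linarith

private lemma exists_roots_fun (h : Polynomial ℝ) (d : ℕ) (hd : h.natDegree = d) (hne : h ≠ 0) :
    ∃ u : Fin d → ℂ, (∀ i, aeval (u i) h = 0) ∧
      ∀ z : ℂ, aeval z h = (h.leadingCoeff : ℂ) * ∏ i, (z - u i) := by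
  set H := h.map (algebraMap ℝ ℂ) with hH
  have hsplit : H.Splits :=
    IsAlgClosed.splits H
  have hGne : H ≠ 0 := Polynomial.map_ne_zero hne
  have hcard : H.roots.toList.length = d := by
    rw [Multiset.length_toList, ← (IsAlgClosed.splits H).natDegree_eq_card_roots, hH, natDegree_map, hd]
  refine ⟨fun i => H.roots.toList.get (Fin.cast hcard.symm i), ?_, ?_⟩
  · intro i
    have hmem : H.roots.toList.get (Fin.cast hcard.symm i) ∈ H.roots := by
      rw [← Multiset.mem_toList]
      exact List.getElem_mem _
    have := (Polynomial.mem_roots hGne).mp hmem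
    rw [aeval_def, ← eval_map]
    exact this
  · intro z
    have hfac : H = C H.leadingCoeff * (H.roots.map fun a => X - C a).prod :=
      hsplit.eq_prod_roots
    have hev : aeval z h = eval z H := by rw [hH, eval_map]; rfl
    have hlc : H.leadingCoeff = (h.leadingCoeff : ℂ) := by
      rw [hH]; exact leadingCoeff_map _
    rw [hev]
    conv_lhs => rw [hfac]
    rw [eval_mul, eval_C, eval_multiset_prod, Multiset.map_map, hlc]
    congr 1
    simp only [Function.comp, eval_sub, eval_X, eval_C]
    conv_lhs => rw [← Multiset.coe_toList H.roots]
    rw [Multiset.map_coe, Multiset.prod_coe]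
    rw [← List.ofFn_get (H.roots.toList.map fun r => z - r)]
    rw [List.prod_ofFn]
    have hlen2 : (H.roots.toList.map fun r => z - r).length = d := by
      rw [List.length_map]; exact hcard
    refine Fintype.prod_equiv (finCongr hlen2) _ _ fun i => ?_
    simp [List.getElem_map]


private lemma limroots (g : ℝ → Polynomial ℝ) (d : ℕ) (a : ℝ) (ha : a ≠ 0)
    (hdeg : ∀ t, (g t).natDegree = d) (hlc : ∀ t, (g t).leadingCoeff = a)
    (M : ℝ) (hM : ∀ t ∈ Set.Icc (0:ℝ) 1, ∀ z : ℂ, aeval z (g t) = 0 → ‖z‖ ≤ M)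
    (hcont : ∀ z : ℂ, Continuous fun t : ℝ => aeval z (g t))
    (s : ℝ) (hs : s ∈ Set.Ico (0:ℝ) 1)
    (hstab : ∀ t ∈ Set.Ioc s 1, ∀ z : ℂ, aeval z (g t) = 0 → z.re < 0) :
    ∀ z : ℂ, aeval z (g s) = 0 → z.re ≤ 0 := by
  intro z hzroot
  set t : ℕ → ℝ := fun n => s + (1 - s) * (1 / (n + 1)) with ht
  have hts : ∀ n, t n ∈ Set.Ioc s 1 := by
    intro n
    constructor
    · have h1 : (0:ℝ) < 1 - s := by linarith [hs.2]
      have h2 : (0:ℝ) < 1 / ((n:ℝ) + 1) := by positivity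
      simp only [ht]; nlinarith
    · have h1 : (0:ℝ) ≤ 1 - s := by linarith [hs.2]
      have h2 : 1 / ((n:ℝ) + 1) ≤ 1 := by
        rw [div_le_one (by positivity)]; linarith [Nat.cast_nonneg (α := ℝ) n]
      simp only [ht]; nlinarith
  have htt : Tendsto t atTop (nhds s) := by
    have h0 : Tendsto (fun n : ℕ => 1 / ((n:ℝ) + 1)) atTop (nhds 0) :=
      tendsto_one_div_add_atTop_nhds_zero_nat
    have := (h0.const_mul (1 - s)).const_add s
    simpa [ht, one_div] using this
  have hne : ∀ n, g (t n) ≠ 0 := fun n => leadingCoeff_ne_zero.mp (by rw [hlc]; exact ha)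
  choose u hu1 hu2 using fun n => exists_roots_fun (g (t n)) d (hdeg _) (hne n)
  have humem : ∀ n, u n ∈ Set.univ.pi fun _ : Fin d => Metric.closedBall (0:ℂ) M := by
    intro n
    rw [Set.mem_univ_pi]
    intro i
    rw [Metric.mem_closedBall, dist_zero_right]
    have hmem : t n ∈ Set.Icc (0:ℝ) 1 := ⟨le_of_lt (lt_of_le_of_lt hs.1 (hts n).1), (hts n).2⟩
    simpa using hM (t n) hmem (u n i) (hu1 n i)
  have hcompact : IsCompact (Set.univ.pi fun _ : Fin d => Metric.closedBall (0:ℂ) M) :=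
    isCompact_univ_pi fun _ => isCompact_closedBall _ _
  obtain ⟨v, -, φ, hφ, hconv⟩ := hcompact.tendsto_subseq humem
  have hconvi : ∀ i, Tendsto (fun n => u (φ n) i) atTop (nhds (v i)) := by
    rw [tendsto_pi_nhds] at hconv
    exact hconv
  have hvre : ∀ i, (v i).re ≤ 0 := by
    intro i
    refine le_of_tendsto ((Complex.continuous_re.tendsto _).comp (hconvi i)) ?_
    exact Filter.Eventually.of_forall fun n =>
      le_of_lt (hstab (t (φ n)) (hts _) _ (hu1 _ i))
  have hlim1 : Tendsto (fun n => aeval z (g (t (φ n)))) atTop (nhds (aeval z (g s))) :=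
    (((hcont z).tendsto s).comp (htt.comp hφ.tendsto_atTop))
  have heqn : (fun n => aeval z (g (t (φ n)))) = fun n => (a:ℂ) * ∏ i, (z - u (φ n) i) := by
    funext n
    rw [hu2, hlc]
  rw [heqn] at hlim1
  have hlim2 : Tendsto (fun n => (a:ℂ) * ∏ i, (z - u (φ n) i)) atTop
      (nhds ((a:ℂ) * ∏ i, (z - v i))) :=
    tendsto_const_nhds.mul (tendsto_finset_prod _ fun i _ => tendsto_const_nhds.sub (hconvi i))
  have hfin : aeval z (g s) = (a:ℂ) * ∏ i, (z - v i) := tendsto_nhds_unique hlim1 hlim2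
  rw [hzroot] at hfin
  have hprod : ∏ i, (z - v i) = 0 := by
    rcases mul_eq_zero.mp hfin.symm with h | h
    · exact absurd h (by exact_mod_cast Complex.ofReal_ne_zero.mpr ha)
    · exact h
  obtain ⟨i, -, hi⟩ := Finset.prod_eq_zero_iff.mp hprod
  rw [sub_eq_zero.mp hi]
  exact hvre i


theorem stmt10 (f p q : Polynomial ℝ)
    (hdec : f = p.comp (Polynomial.X ^ 2) + Polynomial.X * q.comp (Polynomial.X ^ 2))
    (hdeg : 0 < f.natDegree) (hq0 : q.eval 0 ≠ 0)
    (c : ℝ) (hc : c = p.eval 0 / q.eval 0)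
    (qt : Polynomial ℝ) (hqt : qt = (p - Polynomial.C c * q).divX)
    (ft : Polynomial ℝ)
    (hft : ft = q.comp (Polynomial.X ^ 2) + Polynomial.X * qt.comp (Polynomial.X ^ 2)) :
    (∀ z : ℂ, Polynomial.aeval z f = 0 → z.re < 0) ↔
      (0 < c ∧ ∀ z : ℂ, Polynomial.aeval z ft = 0 → z.re < 0) := by
  have hcq : p.eval 0 = c * q.eval 0 := by rw [hc]; field_simp
  have hXqt : X * qt = p - C c * q := by
    have h0 : (p - C c * q).coeff 0 = 0 := by
      rw [coeff_zero_eq_eval_zero]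
      simp [hcq]
    have h1 := X_mul_divX_add (p - C c * q)
    rw [h0, map_zero, add_zero, ← hqt] at h1
    exact h1
  have evReal : ∀ (h : Polynomial ℝ) (x : ℝ), aeval (x : ℂ) h = ((h.eval x : ℝ) : ℂ) := by
    intro h x
    rw [← Complex.coe_algebraMap, aeval_algebraMap_apply_eq_algebraMap_eval]
  have evP : ∀ w : ℂ, aeval w f = aeval (w ^ 2) p + w * aeval (w ^ 2) q := by
    intro w; rw [hdec]; simp [aeval_comp]
  have evF : ∀ w : ℂ, aeval w ft = aeval (w ^ 2) q + w * aeval (w ^ 2) qt := by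
    intro w; rw [hft]; simp [aeval_comp]
  have evQT : ∀ w : ℂ, w ^ 2 * aeval (w ^ 2) qt = aeval (w ^ 2) p - (c : ℂ) * aeval (w ^ 2) q := by
    intro w
    have h1 := congrArg (aeval (w ^ 2 : ℂ)) hXqt
    simpa using h1
  have hconjroot : ∀ (h : Polynomial ℝ) (w : ℂ), w.re = 0 → aeval w h = 0 → aeval (-w) h = 0 := by
    intro h w hwre hw
    have hcw : -w = starRingEnd ℂ w := by
      apply Complex.ext
      · simp [hwre]
      · simp
    rw [hcw, Polynomial.aeval_conj, hw, map_zero]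
  constructor
  · -- forward
    intro hstabf
    have hfne : f ≠ 0 := by
      intro h0
      rw [h0] at hdeg
      simp at hdeg
    have hp0 : p.eval 0 ≠ 0 := by
      intro h0
      have h00 : ((0:ℂ)^2) = ((0:ℝ):ℂ) := by norm_num
      have hev0 : aeval (0:ℂ) f = 0 := by
        rw [evP, h00, evReal, evReal, h0]
        simp
      have := hstabf 0 hev0
      simp at this
    have evR : ∀ t : ℝ, f.eval t = p.eval (t^2) + t * q.eval (t^2) := by
      intro t; rw [hdec]; simp [eval_comp]
    have hPQ : ∀ t : ℝ, 0 < t → 0 ≤ p.eval (t^2) * q.eval (t^2) := by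
      intro t ht
      have hkey := keyW f hfne hstabf (t:ℂ) (by simpa using ht)
      have h1 : aeval ((t:ℝ):ℂ) f = ((f.eval t : ℝ):ℂ) := evReal f t
      have h2 : aeval (-(t:ℂ)) f = ((f.eval (-t) : ℝ):ℂ) := by
        rw [show -(t:ℂ) = ((-t:ℝ):ℂ) by push_cast; ring, evReal]
      rw [h1, h2, Complex.norm_real, Complex.norm_real, Real.norm_eq_abs, Real.norm_eq_abs] at hkey
      have h3 : f.eval (-t) * f.eval (-t) ≤ f.eval t * f.eval t := by
        have := mul_self_le_mul_self (abs_nonneg (f.eval (-t))) hkey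
        rwa [abs_mul_abs_self, abs_mul_abs_self] at this
      rw [evR, evR, neg_sq] at h3
      nlinarith [h3, ht]
    have hpq00 : 0 ≤ p.eval 0 * q.eval 0 := by
      have hcont2 : Continuous fun t : ℝ => p.eval (t^2) * q.eval (t^2) := by
        exact ((p.continuous.comp (continuous_pow 2))).mul
          ((q.continuous.comp (continuous_pow 2)))
      have htend : Tendsto (fun t : ℝ => p.eval (t^2) * q.eval (t^2))
          (nhdsWithin 0 (Set.Ioi 0)) (nhds (p.eval 0 * q.eval 0)) := by
        have h8 : Tendsto (fun t : ℝ => p.eval (t^2) * q.eval (t^2))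
            (nhdsWithin 0 (Set.Ioi 0)) (nhds (p.eval ((0:ℝ)^2) * q.eval ((0:ℝ)^2))) :=
          (hcont2.tendsto 0).mono_left nhdsWithin_le_nhds
        simpa using h8
      exact ge_of_tendsto htend (by
        filter_upwards [self_mem_nhdsWithin] with t ht
        exact hPQ t ht)
    have hc0 : 0 < c := by
      have hne : p.eval 0 * q.eval 0 ≠ 0 := mul_ne_zero hp0 hq0
      rcases mul_pos_iff.mp (lt_of_le_of_ne hpq00 (Ne.symm hne)) with ⟨h1, h2⟩ | ⟨h1, h2⟩
      · rw [hc]; exact div_pos h1 h2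
      · rw [hc]; exact div_pos_iff.mpr (Or.inr ⟨h1, h2⟩)
    refine ⟨hc0, ?_⟩
    intro z hz
    by_contra hrez
    push_neg at hrez
    rcases eq_or_lt_of_le hrez with heq0 | hltz
    · -- z.re = 0
      rcases eq_or_ne z 0 with hz0 | hz0
      · rw [hz0, evF] at hz
        have h00 : ((0:ℂ)^2) = ((0:ℝ):ℂ) := by norm_num
        rw [h00, evReal, evReal] at hz
        simp at hz
        exact hq0 hz
      · have hconj := hconjroot ft z heq0.symm hz
        rw [evF] at hz
        rw [evF, neg_sq] at hconj
        have hQ : aeval (z^2) q = 0 := by linear_combination (hz + hconj) / 2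
        have hQT : aeval (z^2) qt = 0 := by
          have h5 : z * aeval (z^2) qt = 0 := by linear_combination (hz - hconj) / 2
          exact (mul_eq_zero.mp h5).resolve_left hz0
        have hP : aeval (z^2) p = 0 := by
          have h6 := evQT z
          rw [hQ, hQT] at h6
          linear_combination -h6
        have hzf : aeval z f = 0 := by rw [evP, hP, hQ]; ring
        have := hstabf z hzf
        rw [← heq0] at this
        exact lt_irrefl 0 this
    · -- 0 < z.re : homotopy argument
      have hqne : q ≠ 0 := fun h => hq0 (by simp [h])
      have hqlc : q.coeff q.natDegree ≠ 0 := by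
        rw [coeff_natDegree]; exact leadingCoeff_ne_zero.mpr hqne
      have hfc : f.coeff (2 * q.natDegree + 1) = q.coeff q.natDegree := by
        rw [hdec, coeff_add]
        have h1 : (p.comp (X^2)).coeff (2 * q.natDegree + 1) = 0 := by
          rw [← Polynomial.expand_eq_comp_X_pow 2,
            Polynomial.coeff_expand (by norm_num : (0:ℕ) < 2)]
          rw [if_neg (by omega)]
        have h2 : (X * q.comp (X^2)).coeff (2 * q.natDegree + 1) = q.coeff q.natDegree := by
          rw [coeff_X_mul, ← Polynomial.expand_eq_comp_X_pow 2,
            Polynomial.coeff_expand_mul' (by norm_num : (0:ℕ) < 2)]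
        rw [h1, h2, zero_add]
      have hdd : 2 * q.natDegree + 1 ≤ f.natDegree :=
        le_natDegree_of_ne_zero (by rw [hfc]; exact hqlc)
      set E := q.comp (X^2 : Polynomial ℝ) with hE
      have hEd : E.natDegree < f.natDegree := by
        rw [hE, natDegree_comp, natDegree_X_pow]
        omega
      set a := f.leadingCoeff with ha
      have hane : a ≠ 0 := leadingCoeff_ne_zero.mpr hfne
      set g : ℝ → Polynomial ℝ := fun t => f - C ((1-t)*c) * E with hg
      have hgco : ∀ (t : ℝ) (i : ℕ), (g t).coeff i = f.coeff i - (1-t)*c * E.coeff i := by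
        intro t i
        simp only [hg, coeff_sub, coeff_C_mul]
      have hgcd : ∀ t : ℝ, (g t).coeff f.natDegree = a := by
        intro t
        rw [hgco, coeff_eq_zero_of_natDegree_lt hEd, mul_zero, sub_zero, ha, coeff_natDegree]
      have hgdeg : ∀ t : ℝ, (g t).natDegree = f.natDegree := by
        intro t
        refine le_antisymm ?_ (le_natDegree_of_ne_zero (by rw [hgcd]; exact hane))
        refine le_trans (natDegree_sub_le _ _) ?_
        refine max_le le_rfl ?_
        exact le_trans (natDegree_C_mul_le _ _) (le_of_lt hEd)
      have hglc : ∀ t : ℝ, (g t).leadingCoeff = a := by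
        intro t
        rw [leadingCoeff, hgdeg, hgcd]
      have hgne : ∀ t : ℝ, g t ≠ 0 := fun t =>
        leadingCoeff_ne_zero.mp (by rw [hglc]; exact hane)
      have evG : ∀ (t : ℝ) (w : ℂ),
          aeval w (g t) = aeval w f - (((1-t)*c : ℝ):ℂ) * aeval (w^2) q := by
        intro t w
        simp only [hg, map_sub, map_mul, aeval_C, hE, aeval_comp, map_pow, aeval_X]
        norm_num
      have hgcont : ∀ w : ℂ, Continuous fun t : ℝ => aeval w (g t) := by
        intro w
        have heqf : (fun t : ℝ => aeval w (g t))
            = fun t : ℝ => aeval w f - (((1-t)*c : ℝ):ℂ) * aeval (w^2) q :=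
          funext fun t => evG t w
        rw [heqf]
        refine continuous_const.sub (Continuous.mul ?_ continuous_const)
        exact Complex.continuous_ofReal.comp ((continuous_const.sub continuous_id).mul
          continuous_const)
      have hg1 : g 1 = f := by simp [hg]
      set M := 1 + (∑ i ∈ Finset.range f.natDegree, (|f.coeff i| + |c| * |E.coeff i|)) / |a|
        with hM
      have hMb : ∀ t ∈ Set.Icc (0:ℝ) 1, ∀ w : ℂ, aeval w (g t) = 0 → ‖w‖ ≤ M := by
        intro t ht w hw
        refine le_trans (root_bound (g t) (hgne t) w hw) ?_
        rw [hgdeg, hglc, hM]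
        have hsum : ∑ i ∈ Finset.range f.natDegree, |(g t).coeff i|
            ≤ ∑ i ∈ Finset.range f.natDegree, (|f.coeff i| + |c| * |E.coeff i|) := by
          refine Finset.sum_le_sum fun i _ => ?_
          rw [hgco]
          refine le_trans (abs_sub _ _) ?_
          have h7 : |(1-t)*c * E.coeff i| ≤ |c| * |E.coeff i| := by
            rw [abs_mul, abs_mul, mul_assoc]
            have h1t : |1-t| ≤ 1 := abs_le.mpr ⟨by linarith [ht.2], by linarith [ht.1]⟩
            have hnn : 0 ≤ |c| * |E.coeff i| := mul_nonneg (abs_nonneg c) (abs_nonneg _)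
            nlinarith [h1t, hnn]
          linarith
        have h9 := (div_le_div_iff_of_pos_right (abs_pos.mpr hane)).mpr hsum
        linarith
      have hgim : ∀ t : ℝ, 0 < t → ∀ w : ℂ, w.re = 0 → aeval w (g t) ≠ 0 := by
        intro t ht w hwre hw
        have hconjw := hconjroot (g t) w hwre hw
        rw [evG, evP] at hw
        rw [evG, evP, neg_sq] at hconjw
        have hwQ : w * aeval (w^2) q = 0 := by linear_combination (hw - hconjw) / 2
        rcases eq_or_ne w 0 with h0 | h0
        · rw [h0] at hw
          have h00 : ((0:ℂ)^2) = ((0:ℝ):ℂ) := by norm_num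
          rw [h00, evReal, evReal] at hw
          have hreal : ((p.eval 0 - (1-t)*c*(q.eval 0) : ℝ) : ℂ) = 0 := by
            push_cast at hw ⊢
            linear_combination hw
          have hreal2 : p.eval 0 - (1-t)*c*(q.eval 0) = 0 := by exact_mod_cast hreal
          have : t * (c * q.eval 0) = 0 := by
            rw [hcq] at hreal2
            linear_combination hreal2
          exact (mul_ne_zero (ne_of_gt ht) (mul_ne_zero (ne_of_gt hc0) hq0)) this
        · have hQ : aeval (w^2) q = 0 := (mul_eq_zero.mp hwQ).resolve_left h0
          have hP : aeval (w^2) p = 0 := by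
            linear_combination hw - w * hQ + (((1-t)*c : ℝ):ℂ) * hQ
          have hwf : aeval w f = 0 := by rw [evP, hP, hQ]; ring
          have := hstabf w hwf
          rw [hwre] at this
          exact lt_irrefl 0 this
      have hg0z : aeval z (g 0) = 0 := by
        rw [evG, evP]
        have h2 := evQT z
        have h3 := evF z
        rw [hz] at h3
        push_cast
        linear_combination -h2 - z * h3
      set T := {t : ℝ | t ∈ Set.Icc (0:ℝ) 1 ∧ ∃ w : ℂ, aeval w (g t) = 0 ∧ 0 < w.re} with hT
      have h0T : (0:ℝ) ∈ T := ⟨⟨le_refl 0, zero_le_one⟩, z, hg0z, hltz⟩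
      have hTbdd : BddAbove T := ⟨1, fun t ht => ht.1.2⟩
      have hTne : T.Nonempty := ⟨0, h0T⟩
      set s := sSup T with hs
      have hs0 : 0 ≤ s := le_csSup hTbdd h0T
      have hs1 : s ≤ 1 := csSup_le hTne fun t ht => ht.1.2
      have h1T : (1:ℝ) ∉ T := by
        rintro ⟨-, w, hw, hwre⟩
        rw [hg1] at hw
        exact absurd (hstabf w hw) (not_lt.mpr (le_of_lt hwre))
      by_cases hsT : s ∈ T
      · obtain ⟨hsI, w, hw, hwre⟩ := hsT
        have hslt : s < 1 := lt_of_le_of_ne hs1 (by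
          intro hseq
          exact h1T (hseq ▸ ⟨hsI, w, hw, hwre⟩))
        have hstab2 : ∀ t ∈ Set.Ioc s 1, ∀ w' : ℂ, aeval w' (g t) = 0 → w'.re < 0 := by
          intro t ht w' hw'
          have htT : t ∉ T := fun htT => absurd (le_csSup hTbdd htT) (not_le.mpr ht.1)
          by_contra hwre'
          push_neg at hwre'
          rcases eq_or_lt_of_le hwre' with h | h
          · exact hgim t (lt_of_le_of_lt hs0 ht.1) w' h.symm hw'
          · exact htT ⟨⟨le_trans hs0 (le_of_lt ht.1), ht.2⟩, w', hw', h⟩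
        have := limroots g f.natDegree a hane hgdeg hglc M hMb hgcont s ⟨hs0, hslt⟩ hstab2 w hw
        linarith [hwre, this]
      · have hspos : 0 < s := lt_of_le_of_ne hs0 fun h => hsT (h ▸ h0T)
        obtain ⟨ts, -, hts, htsT⟩ := exists_seq_tendsto_sSup hTne hTbdd
        choose w hw hwre using fun n => (htsT n).2
        have hwb : ∀ n, w n ∈ Metric.closedBall (0:ℂ) M := by
          intro n
          rw [Metric.mem_closedBall, dist_zero_right]
          simpa using hMb (ts n) (htsT n).1 (w n) (hw n)
        obtain ⟨w0, -, φ, hφ, hwconv⟩ := (isCompact_closedBall (0:ℂ) M).tendsto_subseq hwb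
        have hw0re : 0 ≤ w0.re :=
          ge_of_tendsto ((Complex.continuous_re.tendsto _).comp hwconv)
            (Filter.Eventually.of_forall fun n => le_of_lt (hwre (φ n)))
        have hcont2 : Continuous fun pr : ℝ × ℂ =>
            aeval pr.2 f - (((1 - pr.1)*c : ℝ):ℂ) * aeval (pr.2^2) q := by
          refine Continuous.sub (f.continuous_aeval.comp continuous_snd) ?_
          refine Continuous.mul ?_ (q.continuous_aeval.comp ((continuous_snd).pow 2))
          exact Complex.continuous_ofReal.comp
            (((continuous_const.sub continuous_fst).mul continuous_const))
        have hlim : Tendsto (fun n => aeval (w (φ n)) (g (ts (φ n)))) atTop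
            (nhds (aeval w0 (g s))) := by
          have h1 : Tendsto (fun n => (ts (φ n), w (φ n))) atTop (nhds (s, w0)) :=
            ((hts.comp hφ.tendsto_atTop)).prodMk_nhds hwconv
          have h2 := (hcont2.tendsto (s, w0)).comp h1
          have h3 : (fun n => aeval (w (φ n)) (g (ts (φ n))))
              = fun n => aeval (w (φ n)) f
                  - (((1 - ts (φ n))*c : ℝ):ℂ) * aeval ((w (φ n))^2) q :=
            funext fun n => evG _ _
          rw [h3, evG]
          exact h2
        have hw0root : aeval w0 (g s) = 0 := by
          have h4 : (fun n => aeval (w (φ n)) (g (ts (φ n)))) = fun _ => (0:ℂ) :=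
            funext fun n => hw (φ n)
          rw [h4] at hlim
          exact (tendsto_nhds_unique tendsto_const_nhds hlim).symm
        rcases eq_or_lt_of_le hw0re with h | h
        · exact hgim s hspos w0 h.symm hw0root
        · exact hsT ⟨⟨hs0, hs1⟩, w0, hw0root, h⟩
  · -- backward
    rintro ⟨hc0, hstabt⟩ z hz
    by_contra hre
    push_neg at hre
    have hftne : ft ≠ 0 := by
      intro h0
      have := hstabt 0 (by rw [h0, map_zero])
      simp at this
    rcases eq_or_lt_of_le hre with heq | hlt
    · -- z.re = 0
      have hB := hconjroot f z heq.symm hz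
      have hA := evP z
      have hB' := evP (-z)
      rw [hB, neg_sq] at hB'
      rw [hz] at hA
      -- 0 = P + zQ, 0 = P - zQ
      rcases eq_or_ne z 0 with hz0 | hz0
      · -- z = 0 : p.eval 0 = 0 but p.eval 0 = c q.eval 0 ≠ 0
        rw [hz0] at hA
        have : ((p.eval 0 : ℝ) : ℂ) = 0 := by
          have h00 : ((0:ℂ) ^ 2) = ((0:ℝ):ℂ) := by norm_num
          rw [h00, evReal] at hA
          linear_combination -hA
        have hp00 : p.eval 0 = 0 := by exact_mod_cast this
        rw [hcq] at hp00
        rcases mul_eq_zero.mp hp00 with h | h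
        · exact absurd h (ne_of_gt hc0)
        · exact hq0 h
      · have hQ : aeval (z ^ 2) q = 0 := by
          have h2 : (2 : ℂ) * z * aeval (z ^ 2) q = 0 := by linear_combination -hA + hB'
          rcases mul_eq_zero.mp h2 with h | h
          · rcases mul_eq_zero.mp h with h' | h'
            · norm_num at h'
            · exact absurd h' hz0
          · exact h
        have hP : aeval (z ^ 2) p = 0 := by linear_combination -hA - z * hQ
        have hQT : aeval (z ^ 2) qt = 0 := by
          have := evQT z
          rw [hP, hQ] at this
          have hz2 : (z : ℂ) ^ 2 ≠ 0 := pow_ne_zero _ hz0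
          have h5 : z ^ 2 * aeval (z ^ 2) qt = 0 := by linear_combination this
          exact (mul_eq_zero.mp h5).resolve_left hz2
        have hftz : aeval z ft = 0 := by rw [evF, hQ, hQT]; ring
        have := hstabt z hftz
        rw [← heq] at this
        exact absurd this (lt_irrefl _)
    · -- 0 < z.re
      set A := aeval (z ^ 2) p with hA
      set B := aeval (z ^ 2) q with hB
      have hz0 : z ≠ 0 := by
        intro h0; rw [h0] at hlt; simp at hlt
      have hfz := evP z
      rw [hz] at hfz
      -- 0 = A + z B
      have hBneg : aeval (-z) f = A - z * B := by rw [evP, neg_sq, ← hA, ← hB]; ring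
      have e1 : 2 * z ^ 2 * aeval z ft = (c : ℂ) * (A - z * B) := by
        rw [evF, ← hB]
        have h2 := evQT z
        rw [← hA, ← hB] at h2
        have hPz : A = -(z * B) := by linear_combination -hfz
        linear_combination 2 * z * h2 + (2 * z - (c:ℂ)) * hPz
      have e2 : 2 * z ^ 2 * aeval (-z) ft = -((2 * z + (c : ℂ)) * (A - z * B)) := by
        rw [evF, neg_sq, ← hB]
        have h2 := evQT z
        rw [← hA, ← hB] at h2
        have hPz : A = -(z * B) := by linear_combination -hfz
        linear_combination -2 * z * h2 + (c:ℂ) * hPz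
      have hkey := keyW ft hftne hstabt z hlt
      have habs : ‖2 * z ^ 2 * aeval (-z) ft‖
          ≤ ‖2 * z ^ 2 * aeval z ft‖ := by
        calc ‖2 * z ^ 2 * aeval (-z) ft‖
            = ‖2 * z ^ 2‖ * ‖aeval (-z) ft‖ := norm_mul _ _
          _ ≤ ‖2 * z ^ 2‖ * ‖aeval z ft‖ :=
              mul_le_mul_of_nonneg_left hkey (norm_nonneg _)
          _ = ‖2 * z ^ 2 * aeval z ft‖ := (norm_mul _ _).symm
      rw [e1, e2] at habs
      by_cases hAB : A - z * B = 0
      · have hBz : B = 0 := by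
          have : (2:ℂ) * z * B = 0 := by linear_combination -hfz - hAB
          rcases mul_eq_zero.mp this with h | h
          · rcases mul_eq_zero.mp h with h' | h'
            · norm_num at h'
            · exact absurd h' hz0
          · exact h
        have hAz : A = 0 := by linear_combination hAB + z * hBz
        have h2 := evQT z
        rw [← hA, ← hB, hAz, hBz] at h2
        have hQTz : aeval (z ^ 2) qt = 0 := by
          have hz2 : (z : ℂ) ^ 2 ≠ 0 := pow_ne_zero _ hz0
          simpa [hz2] using h2
        have hftz : aeval z ft = 0 := by rw [evF, ← hB, hBz, hQTz]; ring
        exact absurd (hstabt z hftz) (not_lt.mpr (le_of_lt hlt))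
      · rw [norm_neg, norm_mul, norm_mul] at habs
        have habsAB : 0 < ‖A - z * B‖ := by
          simpa using hAB
        have h3 : ‖2 * z + (c:ℂ)‖ ≤ ‖(c:ℂ)‖ :=
          le_of_mul_le_mul_right habs habsAB
        have h4 : (2 * z + (c:ℂ)).re ≤ ‖2 * z + (c:ℂ)‖ := Complex.re_le_norm _
        have h5 : (2 * z + (c:ℂ)).re = 2 * z.re + c := by simp
        have h6 : ‖(c:ℂ)‖ = c := by
          rw [Complex.norm_real, Real.norm_eq_abs, abs_of_pos hc0]
        have h7 : 2 * z.re + c ≤ c := by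
          calc 2 * z.re + c = (2 * z + (c:ℂ)).re := h5.symm
            _ ≤ ‖2 * z + (c:ℂ)‖ := h4
            _ ≤ ‖(c:ℂ)‖ := h3
            _ = c := h6
        linarith
end

section
/- A real polynomial f of degree n with f(0) > 0 is stable if and only if the first n+1 leading principal minors Δ₁(f), …, Δ_{n+1}(f) of its infinite Hurwitz matrix H(f) are all positive. -/
open Polynomial

/-- The infinite Hurwitz matrix of a real polynomial (0-indexed): row 0 is
`(a₀, a₂, a₄, …)`, row 1 is `(0, a₁, a₃, …)`, row 2 is `(0, a₀, a₂, …)`, etc.,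
i.e. entry `(i,j)` is `a_{2j−i}` (interpreted as `0` when `2j − i < 0`). -/
def HurwitzMatrix (f : Polynomial ℝ) : Matrix ℕ ℕ ℝ :=
  fun i j => if i ≤ 2 * j then f.coeff (2 * j - i) else 0

/-- The infinite matrix `J(c)` (0-indexed): each even row `2i` equals
`c·e_{2i} + e_{2i+1}` and each odd row `2i+1` equals `e_{2i+3}`. -/
def Jmat (c : ℝ) : Matrix ℕ ℕ ℝ :=
  fun i j =>
    if i % 2 = 0 then (if j = i then c else if j = i + 1 then 1 else 0)
    else (if j = i + 2 then 1 else 0)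

/-- Product of infinite matrices, defined via (absolutely convergent) sums;
well-defined in particular when `A` is row-finite. -/
noncomputable def mulInf (A B : Matrix ℕ ℕ ℝ) : Matrix ℕ ℕ ℝ :=
  fun i j => ∑' k : ℕ, A i k * B k j

/-- The `n`-th leading principal minor of an infinite matrix. -/
noncomputable def leadingMinor (A : Matrix ℕ ℕ ℝ) (n : ℕ) : ℝ :=
  Matrix.det (Matrix.of fun i j : Fin n => A (i : ℕ) (j : ℕ))

/-- A matrix indexed by `ℕ × ℕ` is totally nonnegative if every finite minor
(with rows and columns taken in increasing order) is nonnegative. -/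
def TotallyNonneg (A : Matrix ℕ ℕ ℝ) : Prop :=
  ∀ (k : ℕ) (r c : Fin k → ℕ), StrictMono r → StrictMono c →
    0 ≤ Matrix.det (Matrix.of fun i j : Fin k => A (r i) (c j))

noncomputable section StmtAux
namespace StmtAux
open Filter Finset



/-- stability of a real polynomial -/
def Stb (p : Polynomial ℝ) : Prop := ∀ z : ℂ, aeval z p = 0 → z.re < 0

lemma aeval_conj (p : Polynomial ℝ) (z : ℂ) :
    aeval ((starRingEnd ℂ) z) p = (starRingEnd ℂ) (aeval z p) := by
  rw [aeval_def, aeval_def, Polynomial.hom_eval₂]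
  congr 1
  ext r
  simp [Complex.conj_ofReal]

/-- even part of a polynomial -/
def evenPart (p : Polynomial ℝ) : Polynomial ℝ :=
  ∑ k ∈ Finset.range (p.natDegree + 1), if Even k then C (p.coeff k) * X ^ k else 0

lemma coeff_evenPart (p : Polynomial ℝ) (j : ℕ) :
    (evenPart p).coeff j = if Even j then p.coeff j else 0 := by
  rw [evenPart, finset_sum_coeff]
  have h1 : ∀ k ∈ Finset.range (p.natDegree + 1),
      (if Even k then C (p.coeff k) * X ^ k else 0).coeff j
        = if k = j then (if Even j then p.coeff j else 0) else 0 := by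
    intro k _
    rcases eq_or_ne k j with rfl | hk
    · split_ifs <;> simp_all [coeff_C_mul, coeff_X_pow]
    · split_ifs <;> simp [coeff_C_mul, coeff_X_pow, Ne.symm hk, hk]
  rw [Finset.sum_congr rfl h1, Finset.sum_ite_eq' (Finset.range (p.natDegree + 1))]
  split_ifs with h h'
  · rfl
  · rfl
  · rw [coeff_eq_zero_of_natDegree_lt]
    simp only [Finset.mem_range, not_lt] at h
    omega
  · rfl

lemma aeval_evenPart (p : Polynomial ℝ) (z : ℂ) :
    aeval z (evenPart p) = (aeval z p + aeval (-z) p) / 2 := by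
  have hs : ∀ w : ℂ, aeval w p
      = ∑ k ∈ Finset.range (p.natDegree + 1), (p.coeff k : ℂ) * w ^ k := by
    intro w
    rw [Polynomial.aeval_eq_sum_range]
    simp [Algebra.smul_def]
  have he : aeval z (evenPart p)
      = ∑ k ∈ Finset.range (p.natDegree + 1),
          (if Even k then (p.coeff k : ℂ) * z ^ k else 0) := by
    rw [evenPart, map_sum]
    refine Finset.sum_congr rfl fun k _ => ?_
    split_ifs <;> simp [Algebra.smul_def]
  rw [he, hs, hs, ← Finset.sum_add_distrib, Finset.sum_div]
  refine Finset.sum_congr rfl fun k _ => ?_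
  rcases Nat.even_or_odd k with h | h
  · rw [if_pos h, h.neg_pow]
    ring
  · rw [if_neg (Nat.not_even_iff_odd.mpr h), h.neg_pow]
    ring

variable (f : Polynomial ℝ)

/-- the Routh quotient -/
def Cc : ℝ := f.coeff 0 / f.coeff 1

/-- coefficients of the Routh reduction -/
def bc (j : ℕ) : ℝ :=
  if Even j then f.coeff (j + 1) else f.coeff (j + 1) - Cc f * f.coeff (j + 2)

/-- the Routh reduction -/
def reduce : Polynomial ℝ :=
  ∑ k ∈ Finset.range f.natDegree, C (bc f k) * X ^ k

lemma bc_eq_zero {j : ℕ} (hj : f.natDegree ≤ j) : bc f j = 0 := by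
  have h1 : f.coeff (j + 1) = 0 := coeff_eq_zero_of_natDegree_lt (by omega)
  have h2 : f.coeff (j + 2) = 0 := coeff_eq_zero_of_natDegree_lt (by omega)
  unfold bc
  split_ifs <;> simp [h1, h2]

lemma coeff_reduce (j : ℕ) : (reduce f).coeff j = bc f j := by
  rw [reduce, finset_sum_coeff]
  have h1 : ∀ k ∈ Finset.range f.natDegree,
      (C (bc f k) * X ^ k).coeff j = if k = j then bc f j else 0 := by
    intro k _
    rcases eq_or_ne k j with rfl | hk
    · simp [coeff_C_mul, coeff_X_pow]
    · simp [coeff_C_mul, coeff_X_pow, Ne.symm hk, hk]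
  rw [Finset.sum_congr rfl h1, Finset.sum_ite_eq' (Finset.range f.natDegree)]
  split_ifs with h
  · rfl
  · rw [bc_eq_zero]
    simp only [Finset.mem_range, not_lt] at h
    omega

lemma coeff_reduce_zero : (reduce f).coeff 0 = f.coeff 1 := by
  rw [coeff_reduce]
  simp [bc]

lemma natDegree_reduce (hn : 1 ≤ f.natDegree) (hf : f ≠ 0) :
    (reduce f).natDegree = f.natDegree - 1 := by
  have htop : (reduce f).coeff (f.natDegree - 1) = f.coeff f.natDegree := by
    rw [coeff_reduce, bc]
    have h1 : f.natDegree - 1 + 1 = f.natDegree := by omega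
    have h2 : f.coeff (f.natDegree - 1 + 2) = 0 :=
      coeff_eq_zero_of_natDegree_lt (by omega)
    split_ifs <;> simp [h1, h2]
  have hne : (reduce f).coeff (f.natDegree - 1) ≠ 0 := by
    rw [htop, ← leadingCoeff]
    exact leadingCoeff_ne_zero.mpr hf
  refine le_antisymm ?_ (le_natDegree_of_ne_zero hne)
  rw [natDegree_le_iff_coeff_eq_zero]
  intro j hj
  rw [coeff_reduce]
  exact bc_eq_zero f (by omega)

lemma reduce_identity (ha1 : f.coeff 1 ≠ 0) :
    X * reduce f + Cc f • evenPart (reduce f) = f := by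
  ext j
  rw [coeff_add, coeff_smul, coeff_evenPart, coeff_reduce]
  match j with
  | 0 =>
    simp only [mul_coeff_zero, coeff_X_zero, zero_mul, zero_add]
    rw [if_pos (Even.zero)]
    simp only [smul_eq_mul]
    unfold Cc bc
    simp only [Even.zero, if_pos]
    field_simp
  | j + 1 =>
    rw [coeff_X_mul, coeff_reduce]
    rcases Nat.even_or_odd j with h | h
    · have h1 : ¬ Even (j + 1) := by simp [Nat.even_add_one, h]
      rw [if_neg h1]
      unfold bc
      rw [if_pos h]
      simp
    · have h1 : Even (j + 1) := Nat.even_add_one.mpr (Nat.not_even_iff_odd.mpr h)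
      rw [if_pos h1]
      unfold bc
      rw [if_neg (Nat.not_even_iff_odd.mpr h), if_pos h1]
      simp only [smul_eq_mul]
      ring


-- the key ratio claim by multiset induction
lemma ratio_claim (m : Multiset ℂ) (hm : ∀ r ∈ m, r.re < 0) :
    ((m.map fun r => X - C r).prod.coeff 0 ≠ 0) ∧
      0 ≤ ((m.map fun r => X - C r).prod.coeff 1 /
            (m.map fun r => X - C r).prod.coeff 0).re ∧
      (m ≠ 0 → 0 < ((m.map fun r => X - C r).prod.coeff 1 /
            (m.map fun r => X - C r).prod.coeff 0).re) := by
  induction m using Multiset.induction_on with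
  | empty => norm_num [Polynomial.coeff_one]
  | cons a m ih =>
    have ha : a.re < 0 := hm a (Multiset.mem_cons_self a m)
    have ha0 : a ≠ 0 := fun h => by simp [h] at ha
    obtain ⟨hq0, hq1, _⟩ := ih (fun r hr => hm r (Multiset.mem_cons_of_mem hr))
    set q := (m.map fun r => X - C r).prod with hq
    have hprod : ((a ::ₘ m).map fun r => X - C r).prod = (X - C a) * q := by
      rw [Multiset.map_cons, Multiset.prod_cons]
    rw [hprod]
    have hc0 : ((X - C a) * q).coeff 0 = -a * q.coeff 0 := by
      rw [mul_coeff_zero]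
      simp
    have hc1 : ((X - C a) * q).coeff 1 = q.coeff 0 - a * q.coeff 1 := by
      have : (X - C a) * q = X * q - C a * q := by ring
      rw [this, coeff_sub, coeff_X_mul, coeff_C_mul]
    have hne : -a * q.coeff 0 ≠ 0 := mul_ne_zero (neg_ne_zero.mpr ha0) hq0
    refine ⟨by rw [hc0]; exact hne, ?_, ?_⟩
    · rw [hc0, hc1]
      have hrw : (q.coeff 0 - a * q.coeff 1) / (-a * q.coeff 0)
          = -1 / a + q.coeff 1 / q.coeff 0 := by
        field_simp
        ring
      rw [hrw, Complex.add_re]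
      have hra : 0 < (-1 / a).re := by
        rw [neg_div, one_div, Complex.neg_re, Complex.inv_re]
        have hns : 0 < Complex.normSq a := Complex.normSq_pos.mpr ha0
        have : a.re / Complex.normSq a < 0 := div_neg_of_neg_of_pos ha hns
        linarith
      linarith
    · intro _
      rw [hc0, hc1]
      have hrw : (q.coeff 0 - a * q.coeff 1) / (-a * q.coeff 0)
          = -1 / a + q.coeff 1 / q.coeff 0 := by
        field_simp
        ring
      rw [hrw, Complex.add_re]
      have hra : 0 < (-1 / a).re := by
        rw [neg_div, one_div, Complex.neg_re, Complex.inv_re]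
        have hns : 0 < Complex.normSq a := Complex.normSq_pos.mpr ha0
        have : a.re / Complex.normSq a < 0 := div_neg_of_neg_of_pos ha hns
        linarith
      linarith

lemma stable_coeff_one_pos {f : Polynomial ℝ} (hstb : Stb f) (ha0 : 0 < f.coeff 0)
    (hn : 1 ≤ f.natDegree) : 0 < f.coeff 1 := by
  have hf : f ≠ 0 := fun h => by simp [h] at ha0
  set P := f.map (algebraMap ℝ ℂ) with hP
  have hPne : P ≠ 0 := by
    rw [hP, Ne, Polynomial.map_eq_zero_iff (algebraMap ℝ ℂ).injective]
    exact hf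
  have hroots : ∀ r ∈ P.roots, r.re < 0 := by
    intro r hr
    apply hstb
    have h2 : P.eval r = 0 := (Polynomial.mem_roots hPne).mp hr
    rwa [hP, Polynomial.eval_map, ← aeval_def] at h2
  have hsplit : P = C P.leadingCoeff * (P.roots.map fun r => X - C r).prod :=
    (IsAlgClosed.splits P).eq_prod_roots
  have hcard : P.roots.card = f.natDegree := by
    rw [(splits_iff_card_roots).mp (IsAlgClosed.splits P)]
    exact f.natDegree_map (algebraMap ℝ ℂ)
  have hmne : P.roots ≠ 0 := by
    intro h
    rw [h] at hcard
    simp at hcard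
    omega
  obtain ⟨hq0, _, hq1⟩ := ratio_claim P.roots hroots
  have hlc : P.leadingCoeff ≠ 0 := leadingCoeff_ne_zero.mpr hPne
  set q := (P.roots.map fun r => X - C r).prod with hqdef
  have h0 : P.coeff 0 = P.leadingCoeff * q.coeff 0 := by
    conv_lhs => rw [hsplit]
    rw [coeff_C_mul]
  have h1 : P.coeff 1 = P.leadingCoeff * q.coeff 1 := by
    conv_lhs => rw [hsplit]
    rw [coeff_C_mul]
  have hratio : (P.coeff 1) / (P.coeff 0) = q.coeff 1 / q.coeff 0 := by
    rw [h0, h1]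
    field_simp
  have hPc : ∀ k, P.coeff k = (f.coeff k : ℂ) := fun k => by
    rw [hP, Polynomial.coeff_map]; rfl
  have hre : ((f.coeff 1 / f.coeff 0 : ℝ) : ℂ).re = (q.coeff 1 / q.coeff 0).re := by
    rw [← hratio, hPc 0, hPc 1, ← Complex.ofReal_div]
  rw [Complex.ofReal_re] at hre
  have hpos : 0 < f.coeff 1 / f.coeff 0 := by
    rw [hre]; exact hq1 hmne
  have := (div_pos_iff).mp hpos
  rcases this with ⟨h, _⟩ | ⟨_, h⟩
  · exact h
  · linarith

-- pointwise factor inequality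
lemma factor_ineq {z a : ℂ} (hz : 0 ≤ z.re) (ha : a.re < 0) :
    ‖-(starRingEnd ℂ) z - a‖ ≤ ‖z - a‖ := by
  rw [← Real.sqrt_sq (norm_nonneg (-(starRingEnd ℂ) z - a)),
      ← Real.sqrt_sq (norm_nonneg (z - a))]
  apply Real.sqrt_le_sqrt
  rw [Complex.sq_norm, Complex.sq_norm]
  simp only [Complex.normSq_apply, Complex.sub_re, Complex.sub_im, Complex.neg_re,
    Complex.neg_im, Complex.conj_re, Complex.conj_im, neg_neg]
  nlinarith [mul_nonneg hz (neg_nonneg.mpr ha.le)]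

lemma prod_ineq (m : Multiset ℂ) (hm : ∀ r ∈ m, r.re < 0) (z : ℂ) (hz : 0 ≤ z.re) :
    ‖(m.map fun r => X - C r).prod.eval (-(starRingEnd ℂ) z)‖ ≤
      ‖(m.map fun r => X - C r).prod.eval z‖ := by
  induction m using Multiset.induction_on with
  | empty => simp
  | cons a m ih =>
    have ha : a.re < 0 := hm a (Multiset.mem_cons_self a m)
    have ihm := ih (fun r hr => hm r (Multiset.mem_cons_of_mem hr))
    rw [Multiset.map_cons, Multiset.prod_cons, eval_mul, eval_mul, norm_mul, norm_mul]
    apply mul_le_mul _ ihm (norm_nonneg _) (norm_nonneg _)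
    simp only [eval_sub, eval_X, eval_C]
    exact factor_ineq hz ha

/-- the weak modulus inequality for stable real polynomials -/
lemma stable_norm_ineq {f : Polynomial ℝ} (hstb : Stb f) {z : ℂ} (hz : 0 ≤ z.re) :
    ‖aeval (-z) f‖ ≤ ‖aeval z f‖ := by
  set P := f.map (algebraMap ℝ ℂ) with hP
  by_cases hf : f = 0
  · simp [hf]
  have hPne : P ≠ 0 := by
    rw [hP, Ne, Polynomial.map_eq_zero_iff (algebraMap ℝ ℂ).injective]
    exact hf
  have hroots : ∀ r ∈ P.roots, r.re < 0 := by
    intro r hr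
    apply hstb
    have h2 : P.eval r = 0 := (Polynomial.mem_roots hPne).mp hr
    rwa [hP, Polynomial.eval_map, ← aeval_def] at h2
  have hsplit : P = C P.leadingCoeff * (P.roots.map fun r => X - C r).prod :=
    (IsAlgClosed.splits P).eq_prod_roots
  have haev : ∀ w : ℂ, aeval w f = P.eval w := fun w => by
    rw [hP, Polynomial.eval_map, aeval_def]
  -- first replace -z by -(conj z) via conjugation
  have hconj : ‖aeval (-z) f‖ = ‖aeval (-(starRingEnd ℂ) z) f‖ := by
    have h1 : (-z : ℂ) = (starRingEnd ℂ) (-(starRingEnd ℂ) z) := by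
      simp
    rw [h1, aeval_conj]
    exact RCLike.norm_conj _
  rw [hconj, haev, haev]
  conv_lhs => rw [hsplit]
  conv_rhs => rw [hsplit]
  simp only [eval_mul, norm_mul, eval_C]
  gcongr
  exact prod_ineq P.roots hroots z hz

/-- converse stability: if `g` is stable and `c > 0` then `X g + c·evenPart g` is stable -/
lemma converse_stability {g f ep : Polynomial ℝ} {cc : ℝ} (hstbg : Stb g) (hC : 0 < cc)
    (hev : ∀ z : ℂ, aeval z ep = (aeval z g + aeval (-z) g) / 2)
    (hident : X * g + cc • ep = f) (ha0 : f.coeff 0 ≠ 0) : Stb f := by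
  intro z hz
  by_contra hre
  push_neg at hre
  have hzero : z ≠ 0 := by
    intro h
    rw [h, ← Polynomial.coeff_zero_eq_aeval_zero'] at hz
    exact ha0 ((_root_.map_eq_zero (algebraMap ℝ ℂ)).mp hz)
  -- set up the equation
  set G := aeval z g with hG
  set Gm := aeval (-z) g with hGm
  have heq : z * G + (cc : ℂ) * ((G + Gm) / 2) = 0 := by
    rw [← hident] at hz
    rw [map_add, map_mul, aeval_X] at hz
    rw [show aeval z (cc • ep) = (cc : ℂ) * aeval z ep by
      rw [Algebra.smul_def, map_mul]
      simp [Polynomial.algebraMap_eq]] at hz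
    rw [hev z] at hz
    exact hz
  have heq2 : G * (z + (cc : ℂ) / 2) = -((cc : ℂ) / 2) * Gm := by
    linear_combination heq
  have hGne : G ≠ 0 := by
    intro h
    exact absurd (hstbg z h) (not_lt.mpr hre)
  have hnorm : ‖G‖ * ‖z + (cc : ℂ) / 2‖ = (cc / 2) * ‖Gm‖ := by
    have := congrArg norm heq2
    rw [norm_mul, norm_mul, norm_neg] at this
    rw [this]
    congr 1
    rw [show ((cc : ℂ) / 2) = ((cc / 2 : ℝ) : ℂ) by push_cast; ring]
    rw [Complex.norm_real, Real.norm_eq_abs, abs_of_pos (by linarith)]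
  have hWm : ‖Gm‖ ≤ ‖G‖ := stable_norm_ineq hstbg hre
  have hGpos : 0 < ‖G‖ := norm_pos_iff.mpr hGne
  have hle : ‖z + (cc : ℂ) / 2‖ ≤ cc / 2 := by
    have h1 : ‖G‖ * ‖z + (cc : ℂ) / 2‖ ≤ (cc / 2) * ‖G‖ := by
      rw [hnorm]
      exact mul_le_mul_of_nonneg_left hWm (by linarith)
    have h2 : ‖G‖ * ‖z + (cc : ℂ) / 2‖ ≤ ‖G‖ * (cc / 2) := by linarith
    exact le_of_mul_le_mul_left h2 hGpos
  -- now derive z = 0, contradiction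
  have hsq : (z.re + cc / 2) ^ 2 + z.im ^ 2 ≤ (cc / 2) ^ 2 := by
    have h1 : ‖z + (cc : ℂ) / 2‖ ^ 2 ≤ (cc / 2) ^ 2 := by
      apply pow_le_pow_left₀ (norm_nonneg _) hle
    rw [Complex.sq_norm, Complex.normSq_apply] at h1
    simp only [Complex.add_re, Complex.add_im] at h1
    rw [show ((cc : ℂ) / 2).re = cc / 2 by
        rw [show ((cc : ℂ) / 2) = ((cc / 2 : ℝ) : ℂ) by push_cast; ring, Complex.ofReal_re],
      show ((cc : ℂ) / 2).im = 0 by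
        rw [show ((cc : ℂ) / 2) = ((cc / 2 : ℝ) : ℂ) by push_cast; ring, Complex.ofReal_im]]
      at h1
    nlinarith [h1]
  have hre0 : z.re = 0 := by nlinarith [sq_nonneg z.im, sq_nonneg z.re]
  have him0 : z.im = 0 := by nlinarith [sq_nonneg z.re]
  exact hzero (Complex.ext hre0 him0)



lemma rootBound {p : Polynomial ℂ} {n : ℕ} (hdeg : p.natDegree = n) (hc : p.coeff n ≠ 0)
    {z : ℂ} (hz : p.eval z = 0) :
    ‖z‖ ≤ 1 + (∑ i ∈ Finset.range n, ‖p.coeff i‖) / ‖p.coeff n‖ := by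
  have hSnn : 0 ≤ (∑ i ∈ Finset.range n, ‖p.coeff i‖) / ‖p.coeff n‖ :=
    div_nonneg (Finset.sum_nonneg fun i _ => norm_nonneg _) (norm_nonneg _)
  by_cases h1 : ‖z‖ ≤ 1
  · linarith
  push_neg at h1
  rcases Nat.eq_zero_or_pos n with hn0 | hnpos
  · exfalso
    subst hn0
    have : p = C (p.coeff 0) := Polynomial.eq_C_of_natDegree_eq_zero hdeg
    rw [this, eval_C] at hz
    exact hc hz
  have hev : p.eval z = ∑ i ∈ Finset.range (n + 1), p.coeff i * z ^ i :=
    Polynomial.eval_eq_sum_range' (by omega) z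
  rw [Finset.sum_range_succ] at hev
  have hmain : p.coeff n * z ^ n = -∑ i ∈ Finset.range n, p.coeff i * z ^ i := by
    rw [hev] at hz
    linear_combination hz
  have hnorm : ‖p.coeff n‖ * ‖z‖ ^ n ≤
      (∑ i ∈ Finset.range n, ‖p.coeff i‖) * ‖z‖ ^ (n - 1) := by
    calc ‖p.coeff n‖ * ‖z‖ ^ n = ‖p.coeff n * z ^ n‖ := by
          rw [norm_mul, norm_pow]
      _ = ‖∑ i ∈ Finset.range n, p.coeff i * z ^ i‖ := by rw [hmain, norm_neg]
      _ ≤ ∑ i ∈ Finset.range n, ‖p.coeff i * z ^ i‖ := norm_sum_le _ _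
      _ ≤ ∑ i ∈ Finset.range n, ‖p.coeff i‖ * ‖z‖ ^ (n - 1) := by
          apply Finset.sum_le_sum
          intro i hi
          rw [norm_mul, norm_pow]
          apply mul_le_mul_of_nonneg_left _ (norm_nonneg _)
          apply pow_le_pow_right₀ h1.le
          simp only [Finset.mem_range] at hi
          omega
      _ = (∑ i ∈ Finset.range n, ‖p.coeff i‖) * ‖z‖ ^ (n - 1) := by
          rw [Finset.sum_mul]
  have hzpow : (0:ℝ) < ‖z‖ ^ (n - 1) := pow_pos (by linarith) _
  have hp : ‖z‖ ^ n = ‖z‖ ^ (n - 1) * ‖z‖ := by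
    rw [← pow_succ]
    congr 1
    omega
  have hkey : ‖p.coeff n‖ * ‖z‖ ≤ ∑ i ∈ Finset.range n, ‖p.coeff i‖ := by
    have h2 : ‖p.coeff n‖ * ‖z‖ * ‖z‖ ^ (n - 1) ≤
        (∑ i ∈ Finset.range n, ‖p.coeff i‖) * ‖z‖ ^ (n - 1) := by
      have h3 : ‖p.coeff n‖ * ‖z‖ * ‖z‖ ^ (n - 1) = ‖p.coeff n‖ * ‖z‖ ^ n := by
        rw [hp]; ring
      rw [h3]
      exact hnorm
    exact le_of_mul_le_mul_right h2 hzpow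
  have hcpos : 0 < ‖p.coeff n‖ := norm_pos_iff.mpr hc
  have : ‖z‖ ≤ (∑ i ∈ Finset.range n, ‖p.coeff i‖) / ‖p.coeff n‖ := by
    rw [le_div_iff₀ hcpos]
    linarith [hkey]
  linarith

-- turn a multiset product into a Fin-indexed product
lemma multiset_prod_fin {n : ℕ} (m : Multiset ℂ) (hcard : Multiset.card m = n)
    (f : ℂ → ℂ) :
    (m.map f).prod = ∏ i : Fin n,
      f (m.toList.get (Fin.cast (by rw [Multiset.length_toList, hcard]) i)) := by
  have hlen : m.toList.length = n := by rw [Multiset.length_toList, hcard]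
  conv_lhs => rw [← Multiset.coe_toList m]
  simp only [Multiset.map_coe, Multiset.prod_coe]
  rw [show m.toList.map f = List.ofFn (f ∘ m.toList.get) by
    conv_lhs => rw [← List.ofFn_get m.toList]
    rw [List.map_ofFn]]
  rw [List.prod_ofFn (f := f ∘ m.toList.get)]
  apply Fintype.prod_equiv (finCongr hlen)
  intro x
  rfl

/-- limits of stable polynomials with fixed degree and leading coefficient
are weakly stable -/
lemma limit_weak_stable {n : ℕ} {c : ℂ} (hc : c ≠ 0) (P : ℕ → Polynomial ℂ)
    (Q : Polynomial ℂ) (M : ℝ)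
    (hdegP : ∀ k, (P k).natDegree = n) (hleadP : ∀ k, (P k).coeff n = c)
    (hdegQ : Q.natDegree ≤ n) (hleadQ : Q.coeff n = c)
    (hconv : ∀ i, Tendsto (fun k => (P k).coeff i) atTop (nhds (Q.coeff i)))
    (hM : ∀ k, ∑ i ∈ Finset.range n, ‖(P k).coeff i‖ ≤ M)
    (hstb : ∀ k z, (P k).eval z = 0 → z.re < 0) :
    ∀ z, Q.eval z = 0 → z.re ≤ 0 := by
  -- roots data
  have hPne : ∀ k, P k ≠ 0 := fun k h => hc (by rw [← hleadP k, h, coeff_zero])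
  have hcard : ∀ k, Multiset.card (P k).roots = n := by
    intro k
    rw [(splits_iff_card_roots).mp (IsAlgClosed.splits (P k)), hdegP k]
  set r : ℕ → Fin n → ℂ := fun k i => (P k).roots.toList.get
    (Fin.cast (by rw [Multiset.length_toList, hcard k]) i) with hr
  have hrmem : ∀ k i, r k i ∈ (P k).roots := by
    intro k i
    rw [hr]
    rw [← Multiset.mem_toList]
    apply List.get_mem
  have hrroot : ∀ k i, (P k).eval (r k i) = 0 := by
    intro k i
    exact (Polynomial.mem_roots (hPne k)).mp (hrmem k i)
  have hrre : ∀ k i, (r k i).re < 0 := fun k i => hstb k _ (hrroot k i)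
  -- uniform bound
  set R : ℝ := 1 + M / ‖c‖ with hR
  have hrbound : ∀ k i, r k i ∈ Metric.closedBall (0:ℂ) R := by
    intro k i
    rw [Metric.mem_closedBall, dist_zero_right]
    have := rootBound (hdegP k) (by rw [hleadP k]; exact hc) (hrroot k i)
    rw [hleadP k] at this
    have hcpos : (0:ℝ) < ‖c‖ := norm_pos_iff.mpr hc
    have hmono : (∑ i ∈ Finset.range n, ‖(P k).coeff i‖) / ‖c‖ ≤ M / ‖c‖ := by
      gcongr
      exact hM k
    rw [hR]
    linarith
  -- Bolzano–Weierstrass in (Fin n → ℂ)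
  have hcpt : IsCompact {v : Fin n → ℂ | ∀ i, v i ∈ Metric.closedBall (0:ℂ) R} := by
    have hset : {v : Fin n → ℂ | ∀ i, v i ∈ Metric.closedBall (0:ℂ) R}
        = Set.pi Set.univ (fun _ => Metric.closedBall (0:ℂ) R) := by
      ext v
      simp [Set.mem_pi]
    rw [hset]
    exact isCompact_univ_pi (fun _ => isCompact_closedBall _ _)
  obtain ⟨w, hw, φ, hφ, hlim⟩ := hcpt.tendsto_subseq (x := r) (fun k i => hrbound k i)
  have hlimi : ∀ i, Tendsto (fun k => r (φ k) i) atTop (nhds (w i)) := by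
    intro i
    exact (tendsto_pi_nhds.mp hlim) i
  -- product formula for P k
  have hPfact : ∀ k z, (P k).eval z = c * ∏ i : Fin n, (z - r k i) := by
    intro k z
    have hlc : (P k).leadingCoeff = c := by
      rw [leadingCoeff, hdegP k, hleadP k]
    have hsplit : P k = C c * ((P k).roots.map fun a => X - C a).prod := by
      conv_lhs => rw [(IsAlgClosed.splits (P k)).eq_prod_roots]
      rw [hlc]
    conv_lhs => rw [hsplit]
    rw [eval_mul, eval_C, eval_multiset_prod]
    congr 1
    rw [Multiset.map_map]
    have heq : ((P k).roots.map fun a => eval z (X - C a)).prod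
        = ((P k).roots.map fun a => z - a).prod := by
      congr 1
      apply Multiset.map_congr rfl
      intro a _
      simp
    rw [show (Multiset.map ((fun p => eval z p) ∘ fun a => X - C a) (P k).roots)
        = ((P k).roots.map fun a => eval z (X - C a)) from rfl, heq,
      multiset_prod_fin (P k).roots (hcard k)]
  -- pointwise limit of evaluations
  have hQfact : ∀ z, Q.eval z = c * ∏ i : Fin n, (z - w i) := by
    intro z
    have h1 : Tendsto (fun k => (P (φ k)).eval z) atTop (nhds (Q.eval z)) := by
      have hev : ∀ k, (P k).eval z = ∑ i ∈ Finset.range (n + 1), (P k).coeff i * z ^ i :=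
        fun k => Polynomial.eval_eq_sum_range' (by rw [hdegP k]; omega) z
      have hevQ : Q.eval z = ∑ i ∈ Finset.range (n + 1), Q.coeff i * z ^ i :=
        Polynomial.eval_eq_sum_range' (by omega) z
      simp only [hev, hevQ]
      apply tendsto_finset_sum
      intro i _
      exact (((hconv i).comp hφ.tendsto_atTop).mul tendsto_const_nhds)
    have h2 : Tendsto (fun k => c * ∏ i : Fin n, (z - r (φ k) i)) atTop
        (nhds (c * ∏ i : Fin n, (z - w i))) := by
      apply Tendsto.const_mul
      apply tendsto_finset_prod
      intro i _
      exact tendsto_const_nhds.sub (hlimi i)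
    have h3 : (fun k => (P (φ k)).eval z) = fun k => c * ∏ i : Fin n, (z - r (φ k) i) := by
      funext k
      exact hPfact (φ k) z
    rw [h3] at h1
    exact tendsto_nhds_unique h1 h2
  -- conclude
  intro z hz
  rw [hQfact z] at hz
  have hprod : ∏ i : Fin n, (z - w i) = 0 := by
    rcases mul_eq_zero.mp hz with h | h
    · exact absurd h hc
    · exact h
  obtain ⟨i, _, hi⟩ := Finset.prod_eq_zero_iff.mp hprod
  have hzw : z = w i := by linear_combination hi
  have hwle : (w i).re ≤ 0 := by
    have hre : Tendsto (fun k => (r (φ k) i).re) atTop (nhds ((w i).re)) :=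
      (Complex.continuous_re.tendsto (w i)).comp (hlimi i)
    exact le_of_tendsto hre (Eventually.of_forall fun k => (hrre (φ k) i).le)
  rw [hzw]
  exact hwle



lemma natDegree_evenPart_le (p : Polynomial ℝ) : (evenPart p).natDegree ≤ p.natDegree := by
  apply natDegree_le_iff_coeff_eq_zero.mpr
  intro j hj
  rw [coeff_evenPart]
  split_ifs
  · exact coeff_eq_zero_of_natDegree_lt hj
  · rfl

lemma coeff_reduce_top (f : Polynomial ℝ) (hn : 1 ≤ f.natDegree) :
    (reduce f).coeff (f.natDegree - 1) = f.coeff f.natDegree := by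
  rw [coeff_reduce, bc]
  have h1 : f.natDegree - 1 + 1 = f.natDegree := by omega
  have h2 : f.coeff (f.natDegree - 1 + 2) = 0 :=
    coeff_eq_zero_of_natDegree_lt (by omega)
  split_ifs <;> simp [h1, h2]

lemma aeval_smul' (r : ℝ) (p : Polynomial ℝ) (z : ℂ) :
    aeval z (r • p) = (r : ℂ) * aeval z p := by
  rw [Algebra.smul_def, map_mul]
  simp [Polynomial.algebraMap_eq]

lemma conj_eq_neg_of_re_eq_zero {z : ℂ} (hz : z.re = 0) : (starRingEnd ℂ) z = -z := by
  apply Complex.ext <;> simp [hz]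

/-- the forward (hard) direction: stability of the Routh reduction -/
lemma forward_stability {f : Polynomial ℝ} (hn : 1 ≤ f.natDegree) (hstb : Stb f)
    (ha0 : 0 < f.coeff 0) (ha1 : 0 < f.coeff 1) : Stb (reduce f) := by
  have hf : f ≠ 0 := fun h => by simp [h] at ha0
  set n := f.natDegree with hnn
  set g := reduce f with hg
  set cc := Cc f with hcc
  have hccpos : 0 < cc := div_pos ha0 ha1
  set q : ℝ → Polynomial ℝ := fun μ => X * g + (μ * cc) • evenPart g with hqdef
  have hq1 : q 1 = f := by
    rw [hqdef]
    simp only [one_mul]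
    exact reduce_identity f ha1.ne'
  have hg0 : g.coeff 0 = f.coeff 1 := coeff_reduce_zero f
  have hdegg : g.natDegree = n - 1 := natDegree_reduce f hn hf
  have hgtop : g.coeff (n - 1) = f.coeff n := coeff_reduce_top f hn
  have hlead : f.coeff n ≠ 0 := by
    rw [hnn, ← leadingCoeff]
    exact leadingCoeff_ne_zero.mpr hf
  -- evaluation formula
  have hqeval : ∀ (μ : ℝ) (z : ℂ), aeval z (q μ)
      = z * aeval z g + ((μ * cc : ℝ) : ℂ) * ((aeval z g + aeval (-z) g) / 2) := by
    intro μ z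
    rw [hqdef]
    simp only [map_add, map_mul, aeval_X]
    rw [aeval_smul', aeval_evenPart]
  -- coefficients of q μ
  have hqco : ∀ (μ : ℝ) (i : ℕ), (q μ).coeff i
      = (X * g).coeff i + μ * (cc * (evenPart g).coeff i) := by
    intro μ i
    rw [hqdef]
    simp only [coeff_add, coeff_smul, smul_eq_mul]
    ring
  have hqlead : ∀ μ : ℝ, (q μ).coeff n = f.coeff n := by
    intro μ
    rw [hqco]
    have h1 : (X * g).coeff n = g.coeff (n - 1) := by
      have h0 : n = (n - 1) + 1 := by omega
      conv_lhs => rw [h0, coeff_X_mul]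
    have h2 : (evenPart g).coeff n = 0 := by
      rw [coeff_evenPart]
      split_ifs
      · exact coeff_eq_zero_of_natDegree_lt (by omega)
      · rfl
    rw [h1, h2, hgtop]
    ring
  have hqcohigh : ∀ (μ : ℝ) (i : ℕ), n < i → (q μ).coeff i = 0 := by
    intro μ i hi
    rw [hqco]
    have h1 : (X * g).coeff i = 0 := by
      apply coeff_eq_zero_of_natDegree_lt
      apply lt_of_le_of_lt (natDegree_mul_le)
      have := natDegree_X_le (R := ℝ)
      omega
    have h2 : (evenPart g).coeff i = 0 := by
      apply coeff_eq_zero_of_natDegree_lt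
      have := natDegree_evenPart_le g
      omega
    rw [h1, h2]
    ring
  have hqdeg : ∀ μ : ℝ, (q μ).natDegree = n := by
    intro μ
    apply le_antisymm
    · apply natDegree_le_iff_coeff_eq_zero.mpr
      intro i hi
      exact hqcohigh μ i hi
    · apply le_natDegree_of_ne_zero
      rw [hqlead]
      exact hlead
  -- no roots on the imaginary axis for μ ∈ (0,1]
  have hnoimag : ∀ μ : ℝ, 0 < μ → μ ≤ 1 → ∀ z : ℂ, z.re = 0 → aeval z (q μ) ≠ 0 := by
    intro μ hμ hμ1 z hz0 heval
    set G := aeval z g with hG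
    have hGm : aeval (-z) g = (starRingEnd ℂ) G := by
      rw [← conj_eq_neg_of_re_eq_zero hz0, aeval_conj]
    rw [hqeval, hGm] at heval
    have heq2 : z * G + ((μ * cc * G.re : ℝ) : ℂ) = 0 := by
      rw [← heval]
      rw [Complex.add_conj]
      push_cast
      ring
    have hre := congrArg Complex.re heq2
    have him := congrArg Complex.im heq2
    simp only [Complex.add_re, Complex.mul_re, Complex.ofReal_re, Complex.zero_re,
      Complex.add_im, Complex.mul_im, Complex.ofReal_im, Complex.zero_im, hz0,
      zero_mul, add_zero, zero_add] at hre him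
    -- hre : -(z.im * G.im) + μ * cc * G.re = 0 ; him : z.im * G.re = 0
    by_cases htz : z.im = 0
    · -- z = 0
      have hzz : z = 0 := Complex.ext hz0 htz
      have hG0 : G = ((f.coeff 1 : ℝ) : ℂ) := by
        rw [hG, hzz, ← Polynomial.coeff_zero_eq_aeval_zero', hg0]
        rfl
      have : G.re = f.coeff 1 := by rw [hG0, Complex.ofReal_re]
      rw [htz, this] at hre
      simp at hre
      rcases hre with h | h
      · rcases h with h | h
        · linarith
        · linarith
      · linarith
    · have hGre : G.re = 0 := by
        rcases mul_eq_zero.mp him with h | h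
        · exact absurd h htz
        · exact h
      have hGim : G.im = 0 := by
        rw [hGre] at hre
        have : z.im * G.im = 0 := by linarith
        rcases mul_eq_zero.mp this with h | h
        · exact absurd h htz
        · exact h
      have hG0 : G = 0 := Complex.ext hGre hGim
      -- then z is a root of f itself
      have hfz : aeval z f = 0 := by
        rw [← hq1, hqeval, hGm, ← hG, hG0]
        simp
      have := hstb z hfz
      rw [hz0] at this
      exact lt_irrefl 0 this
  -- uniform coefficient bound
  set M : ℝ := ∑ i ∈ Finset.range n, (|(X * g).coeff i| + cc * |(evenPart g).coeff i|)
    with hM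
  have hMbound : ∀ μ : ℝ, 0 ≤ μ → μ ≤ 1 →
      ∑ i ∈ Finset.range n, ‖((q μ).map (algebraMap ℝ ℂ)).coeff i‖ ≤ M := by
    intro μ h0 h1
    rw [hM]
    apply Finset.sum_le_sum
    intro i _
    rw [Polynomial.coeff_map,
      show (algebraMap ℝ ℂ) ((q μ).coeff i) = (((q μ).coeff i : ℝ) : ℂ) from rfl,
      Complex.norm_real, Real.norm_eq_abs, hqco]
    calc |(X * g).coeff i + μ * (cc * (evenPart g).coeff i)|
        ≤ |(X * g).coeff i| + |μ * (cc * (evenPart g).coeff i)| := abs_add_le _ _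
      _ ≤ |(X * g).coeff i| + cc * |(evenPart g).coeff i| := by
          have : |μ * (cc * (evenPart g).coeff i)| ≤ cc * |(evenPart g).coeff i| := by
            rw [abs_mul, abs_mul, abs_of_nonneg h0, abs_of_pos hccpos]
            calc μ * (cc * |(evenPart g).coeff i|) ≤ 1 * (cc * |(evenPart g).coeff i|) := by
                  apply mul_le_mul_of_nonneg_right h1
                  positivity
              _ = cc * |(evenPart g).coeff i| := one_mul _
          linarith
  -- complex leading coefficient
  set c : ℂ := ((f.coeff n : ℝ) : ℂ) with hcdef
  have hcne : c ≠ 0 := by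
    rw [hcdef]
    exact_mod_cast hlead
  have hmapdeg : ∀ μ : ℝ, ((q μ).map (algebraMap ℝ ℂ)).natDegree = n := by
    intro μ
    rw [(q μ).natDegree_map (algebraMap ℝ ℂ), hqdeg]
  have hmaplead : ∀ μ : ℝ, ((q μ).map (algebraMap ℝ ℂ)).coeff n = c := by
    intro μ
    rw [Polynomial.coeff_map, hqlead]
    rfl
  -- uniform root bound
  have hrootbd : ∀ μ : ℝ, 0 ≤ μ → μ ≤ 1 → ∀ z : ℂ, aeval z (q μ) = 0 →
      z ∈ Metric.closedBall (0:ℂ) (1 + M / ‖c‖) := by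
    intro μ h0 h1 z hz
    rw [Metric.mem_closedBall, dist_zero_right]
    have hev : ((q μ).map (algebraMap ℝ ℂ)).eval z = 0 := by
      rw [Polynomial.eval_map, ← aeval_def]
      exact hz
    have := rootBound (hmapdeg μ) (by rw [hmaplead μ]; exact hcne) hev
    rw [hmaplead μ] at this
    have h2 : (∑ i ∈ Finset.range n, ‖((q μ).map (algebraMap ℝ ℂ)).coeff i‖) / ‖c‖
        ≤ M / ‖c‖ := by
      gcongr
      exact hMbound μ h0 h1
    linarith
  -- evaluation as a continuous function of (μ, z)
  have haevF : ∀ (μ : ℝ) (z : ℂ), aeval z (q μ)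
      = aeval z (X * g) + (μ : ℂ) * ((cc : ℝ) : ℂ) * aeval z (evenPart g) := by
    intro μ z
    rw [hqdef]
    simp only [map_add]
    rw [aeval_smul']
    push_cast
    ring
  have hcontF : Continuous (fun p : ℝ × ℂ =>
      aeval p.2 (X * g) + (p.1 : ℂ) * ((cc : ℝ) : ℂ) * aeval p.2 (evenPart g)) := by
    apply Continuous.add
    · exact (Polynomial.continuous_aeval (X * g)).comp continuous_snd
    · apply Continuous.mul
      · apply Continuous.mul
        · exact Complex.continuous_ofReal.comp continuous_fst
        · exact continuous_const
      · exact (Polynomial.continuous_aeval (evenPart g)).comp continuous_snd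
  -- the bad set
  set Bset : Set ℝ := {μ | μ ∈ Set.Icc (0:ℝ) 1 ∧ ∃ z : ℂ, 0 ≤ z.re ∧ aeval z (q μ) = 0}
    with hBset
  have hB0 : (0:ℝ) ∈ Bset := by
    refine ⟨⟨le_refl 0, zero_le_one⟩, 0, le_refl 0, ?_⟩
    rw [← Polynomial.coeff_zero_eq_aeval_zero', hqco]
    simp [mul_coeff_zero]
  have hBclosed : IsClosed Bset := by
    apply IsSeqClosed.isClosed
    intro xs μ' hxs hlim
    have hIcc : ∀ k, xs k ∈ Set.Icc (0:ℝ) 1 := fun k => (hxs k).1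
    choose z hzre hzroot using fun k => (hxs k).2
    have hμIcc : μ' ∈ Set.Icc (0:ℝ) 1 :=
      isClosed_Icc.mem_of_tendsto hlim (Eventually.of_forall hIcc)
    have hzbd : ∀ k, z k ∈ Metric.closedBall (0:ℂ) (1 + M / ‖c‖) :=
      fun k => hrootbd (xs k) (hIcc k).1 (hIcc k).2 (z k) (hzroot k)
    obtain ⟨z₀, hz₀mem, φ, hφ, hzlim⟩ := (isCompact_closedBall (0:ℂ) _).tendsto_subseq hzbd
    refine ⟨hμIcc, z₀, ?_, ?_⟩
    · have hret : Tendsto (fun k => (z (φ k)).re) atTop (nhds z₀.re) :=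
        (Complex.continuous_re.tendsto z₀).comp hzlim
      exact ge_of_tendsto hret (Eventually.of_forall fun k => hzre (φ k))
    · have h1 : Tendsto (fun k => (xs (φ k), z (φ k))) atTop (nhds (μ', z₀)) :=
        ((hlim.comp hφ.tendsto_atTop).prodMk_nhds hzlim)
      have h2 := (hcontF.tendsto (μ', z₀)).comp h1
      have h3 : ((fun p : ℝ × ℂ =>
          aeval p.2 (X * g) + (p.1 : ℂ) * ((cc : ℝ) : ℂ) * aeval p.2 (evenPart g)) ∘
          (fun k => (xs (φ k), z (φ k)))) = fun _ => (0:ℂ) := by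
        funext k
        show aeval (z (φ k)) (X * g) + _ = _
        rw [← haevF]
        exact hzroot (φ k)
      rw [h3] at h2
      have h4 := tendsto_nhds_unique h2 tendsto_const_nhds
      rw [haevF]
      exact h4
  have hBsub : Bset ⊆ Set.Icc 0 1 := fun μ hμ => hμ.1
  have hBcpt : IsCompact Bset := IsCompact.of_isClosed_subset isCompact_Icc hBclosed hBsub
  have hBne : Bset.Nonempty := ⟨0, hB0⟩
  set μs := sSup Bset with hμsdef
  have hμsB : μs ∈ Bset := hBcpt.sSup_mem hBne
  have hμs0 : 0 ≤ μs := hμsB.1.1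
  have hμs1 : μs < 1 := by
    rcases lt_or_eq_of_le hμsB.1.2 with h | h
    · exact h
    · exfalso
      have h1B : (1:ℝ) ∈ Bset := h ▸ hμsB
      obtain ⟨-, z₁, hz₁re, hz₁root⟩ := h1B
      rw [hq1] at hz₁root
      have := hstb z₁ hz₁root
      linarith
  have habove : ∀ μ : ℝ, μs < μ → μ ≤ 1 → Stb (q μ) := by
    intro μ hμa hμb z hz
    by_contra hre
    push_neg at hre
    have hmem : μ ∈ Bset := ⟨⟨by linarith, hμb⟩, z, hre, hz⟩
    have := le_csSup hBcpt.bddAbove hmem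
    linarith
  -- the approximating sequence
  set μk : ℕ → ℝ := fun k => μs + (1 - μs) * (1 / (k + 1 : ℝ)) with hμk
  have hμkmem : ∀ k, μs < μk k ∧ μk k ≤ 1 := by
    intro k
    have hpos : (0:ℝ) < 1 / (k + 1 : ℝ) := by positivity
    have hle1 : 1 / (k + 1 : ℝ) ≤ 1 := by
      rw [div_le_one (by positivity)]
      have : (0:ℝ) ≤ (k:ℝ) := Nat.cast_nonneg k
      linarith
    constructor
    · have : 0 < (1 - μs) * (1 / (k + 1 : ℝ)) := by
        apply mul_pos (by linarith) hpos
      rw [hμk]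
      simp only
      linarith
    · have : (1 - μs) * (1 / (k + 1 : ℝ)) ≤ (1 - μs) * 1 := by
        apply mul_le_mul_of_nonneg_left hle1 (by linarith)
      rw [hμk]
      simp only
      linarith
  have hμklim : Tendsto μk atTop (nhds μs) := by
    have h0 : Tendsto (fun k : ℕ => (1 - μs) * (1 / (k + 1 : ℝ))) atTop (nhds 0) := by
      have := tendsto_one_div_add_atTop_nhds_zero_nat.const_mul (1 - μs)
      simpa using this
    have h1 := h0.const_add μs
    rw [add_zero] at h1
    exact h1
  -- weak stability at μs
  have hweak : ∀ z : ℂ, aeval z (q μs) = 0 → z.re ≤ 0 := by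
    have key := limit_weak_stable hcne (fun k => (q (μk k)).map (algebraMap ℝ ℂ))
      ((q μs).map (algebraMap ℝ ℂ)) M
      (fun k => hmapdeg (μk k)) (fun k => hmaplead (μk k))
      (le_of_eq (hmapdeg μs)) (hmaplead μs)
      (by
        intro i
        simp only [Polynomial.coeff_map]
        have hre : Tendsto (fun k => (q (μk k)).coeff i) atTop (nhds ((q μs).coeff i)) := by
          simp only [hqco]
          have : Tendsto (fun k => μk k * (cc * (evenPart g).coeff i)) atTop
              (nhds (μs * (cc * (evenPart g).coeff i))) := hμklim.mul_const _
          exact this.const_add _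
        exact (Complex.continuous_ofReal.tendsto _).comp hre)
      (fun k => hMbound (μk k) (le_of_lt (lt_of_le_of_lt hμs0 (hμkmem k).1)) (hμkmem k).2)
      (by
        intro k z hz
        apply habove (μk k) (hμkmem k).1 (hμkmem k).2
        rw [aeval_def, ← Polynomial.eval_map]
        exact hz)
    intro z hz
    apply key z
    rw [Polynomial.eval_map, ← aeval_def]
    exact hz
  -- conclude μs = 0
  obtain ⟨-, z₁, hz₁re, hz₁root⟩ := hμsB
  have hz₁re0 : z₁.re = 0 := le_antisymm (hweak z₁ hz₁root) hz₁re
  have hμseq0 : μs = 0 := by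
    by_contra h
    exact hnoimag μs (lt_of_le_of_ne hμs0 (Ne.symm h)) (le_of_lt hμs1) z₁ hz₁re0 hz₁root
  have hq0 : q 0 = X * g := by
    rw [hqdef]
    simp
  rw [hμseq0, hq0] at hweak
  -- final conclusion : Stb g
  intro z hzg
  have hXg : aeval z (X * g) = 0 := by
    rw [map_mul, aeval_X]
    rw [show aeval z (reduce f) = aeval z g from rfl] at hzg
    rw [hzg, mul_zero]
  have hle := hweak z hXg
  rcases lt_or_eq_of_le hle with h | h
  · exact h
  · exfalso
    have hre0 : z.re = 0 := h
    have hzg' : aeval z g = 0 := by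
      rw [show aeval z (reduce f) = aeval z g from rfl] at hzg
      exact hzg
    have hfz : aeval z f = 0 := by
      rw [← hq1, hqeval]
      have hGm : aeval (-z) g = (starRingEnd ℂ) (aeval z g) := by
        rw [← conj_eq_neg_of_re_eq_zero hre0, aeval_conj]
      rw [hGm, hzg']
      simp
    have := hstb z hfz
    rw [hre0] at this
    exact lt_irrefl 0 this


/-- the shifted (odd-start) Hurwitz matrix -/
def Ht (f : Polynomial ℝ) : Matrix ℕ ℕ ℝ :=
  fun i j => if i ≤ 2 * j + 1 then f.coeff (2 * j + 1 - i) else 0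

lemma leadingMinor_zero (A : Matrix ℕ ℕ ℝ) : leadingMinor A 0 = 1 := by
  rw [leadingMinor, Matrix.det_fin_zero]

lemma leadingMinor_one (A : Matrix ℕ ℕ ℝ) : leadingMinor A 1 = A 0 0 := by
  rw [leadingMinor, Matrix.det_fin_one]
  rfl

lemma hurwitz_00 (f : Polynomial ℝ) : HurwitzMatrix f 0 0 = f.coeff 0 := by
  rw [HurwitzMatrix]
  norm_num

lemma ht_00 (f : Polynomial ℝ) : Ht f 0 0 = f.coeff 1 := by
  rw [Ht]
  norm_num

/-- expansion along the first column -/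
lemma minor_expand (f : Polynomial ℝ) (j : ℕ) :
    leadingMinor (HurwitzMatrix f) (j + 1) = f.coeff 0 * leadingMinor (Ht f) j := by
  rw [leadingMinor, leadingMinor]
  rw [Matrix.det_succ_column_zero]
  rw [Finset.sum_eq_single (0 : Fin (j + 1))]
  · simp only [Fin.val_zero, pow_zero, one_mul, Matrix.of_apply]
    rw [show HurwitzMatrix f 0 0 = f.coeff 0 from hurwitz_00 f]
    congr 1
    have hsub : (Matrix.of fun i l : Fin (j+1) => HurwitzMatrix f (i:ℕ) (l:ℕ)).submatrix
        (0 : Fin (j+1)).succAbove Fin.succ = Matrix.of fun i l : Fin j => Ht f (i:ℕ) (l:ℕ) := by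
      ext i l
      simp only [Matrix.submatrix_apply, Matrix.of_apply, Fin.succAbove_zero, Fin.val_succ]
      rw [HurwitzMatrix, Ht]
      by_cases h : (i : ℕ) ≤ 2 * (l : ℕ) + 1
      · rw [if_pos (by omega), if_pos h]
        congr 1
        omega
      · rw [if_neg (by omega), if_neg h]
    rw [hsub]
  · intro i _ hi
    have hival : (i : ℕ) ≠ 0 := fun h => hi (Fin.ext h)
    have hzero : HurwitzMatrix f (i : ℕ) ((0 : Fin (j+1)) : ℕ) = 0 := by
      simp only [Fin.val_zero]
      rw [HurwitzMatrix]
      rw [if_neg]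
      omega
    simp only [Matrix.of_apply]
    rw [hzero]
    ring
  · intro h
    exact absurd (Finset.mem_univ _) h

lemma ht_entry_even (f : Polynomial ℝ) {i : ℕ} (hi : Even i) (l : ℕ) :
    Ht f i l = HurwitzMatrix (reduce f) i l := by
  rw [Ht, HurwitzMatrix]
  rw [Nat.even_iff] at hi
  by_cases h : i ≤ 2 * l
  · rw [if_pos (by omega), if_pos h, coeff_reduce, bc]
    rw [if_pos (by rw [Nat.even_iff]; omega)]
    congr 1
    omega
  · rw [if_neg (by omega), if_neg h]

lemma ht_entry_odd (f : Polynomial ℝ) (hCc : Cc f * f.coeff 1 = f.coeff 0)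
    {i : ℕ} (hi : Odd i) (l : ℕ) :
    Ht f i l = HurwitzMatrix (reduce f) i l
      + Cc f * HurwitzMatrix (reduce f) (i - 1) l := by
  rw [Ht, HurwitzMatrix, HurwitzMatrix]
  rw [Nat.odd_iff] at hi
  by_cases h : i ≤ 2 * l
  · rw [if_pos (by omega), if_pos h, if_pos (by omega), coeff_reduce, coeff_reduce, bc, bc]
    rw [if_neg (by rw [Nat.even_iff]; omega), if_pos (by rw [Nat.even_iff]; omega)]
    have e1 : 2*l - i + 1 = 2*l + 1 - i := by omega
    have e2 : 2*l - i + 2 = 2*l - (i-1) + 1 := by omega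
    rw [e1, e2]
    ring
  · by_cases h1 : i = 2*l + 1
    · rw [if_pos (by omega), if_neg h, if_pos (by omega), coeff_reduce, bc]
      rw [if_pos (by rw [Nat.even_iff]; omega)]
      have e3 : 2*l + 1 - i = 0 := by omega
      have e4 : 2*l - (i-1) = 0 := by omega
      rw [e3, e4]
      rw [← hCc]
      ring
    · rw [if_neg (by omega), if_neg h, if_neg (by omega)]
      ring

lemma minor_shift (f : Polynomial ℝ) (hCc : Cc f * f.coeff 1 = f.coeff 0) (m : ℕ) :
    leadingMinor (Ht f) m = leadingMinor (HurwitzMatrix (reduce f)) m := by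
  set G : Matrix (Fin m) (Fin m) ℝ :=
    Matrix.of (fun i l : Fin m => HurwitzMatrix (reduce f) (i:ℕ) (l:ℕ)) with hG
  set N : Matrix (Fin m) (Fin m) ℝ :=
    Matrix.of (fun i k : Fin m => if ((i:ℕ) = (k:ℕ)+1 ∧ Odd (i:ℕ)) then Cc f else 0) with hN
  set E := (1 : Matrix (Fin m) (Fin m) ℝ) + N with hE
  have hNdiag : ∀ i : Fin m, N i i = 0 := by
    intro i
    rw [hN, Matrix.of_apply, if_neg]
    rintro ⟨h1, -⟩
    omega
  have hdetE : E.det = 1 := by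
    have htri : E.BlockTriangular OrderDual.toDual := by
      intro i k hik
      have hik' : i < k := hik
      rw [hE, Matrix.add_apply, Matrix.one_apply_ne (ne_of_lt hik'), hN, Matrix.of_apply,
        if_neg]
      · ring
      · rintro ⟨h1, -⟩
        have : (i:ℕ) < (k:ℕ) := hik'
        omega
    rw [Matrix.det_of_lowerTriangular E htri]
    apply Finset.prod_eq_one
    intro i _
    rw [hE, Matrix.add_apply, Matrix.one_apply_eq, hNdiag]
    ring
  have hT : Matrix.of (fun i l : Fin m => Ht f (i:ℕ) (l:ℕ)) = E * G := by
    ext i l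
    rw [hE, Matrix.add_mul, Matrix.one_mul, Matrix.add_apply]
    have hNG : (N * G) i l
        = if Odd (i:ℕ) then Cc f * HurwitzMatrix (reduce f) ((i:ℕ)-1) (l:ℕ) else 0 := by
      rw [Matrix.mul_apply]
      by_cases hodd : Odd (i:ℕ)
      · have hi1 : 1 ≤ (i:ℕ) := by
          rw [Nat.odd_iff] at hodd
          omega
        have hlt : (i:ℕ) - 1 < m := by
          have := i.isLt
          omega
        rw [Finset.sum_eq_single (⟨(i:ℕ)-1, hlt⟩ : Fin m)]
        · have hc : (i:ℕ) = ((⟨(i:ℕ)-1, hlt⟩ : Fin m) : ℕ) + 1 := by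
            simp only [Fin.val_mk]
            omega
          rw [if_pos hodd, hN, Matrix.of_apply, if_pos ⟨hc, hodd⟩, hG, Matrix.of_apply]
        · intro k _ hk
          rw [hN, Matrix.of_apply, if_neg]
          · ring
          · rintro ⟨h1, -⟩
            apply hk
            apply Fin.ext
            simp
            omega
        · intro h
          exact absurd (Finset.mem_univ _) h
      · rw [if_neg hodd]
        apply Finset.sum_eq_zero
        intro k _
        rw [hN, Matrix.of_apply, if_neg]
        · ring
        · rintro ⟨-, h2⟩
          exact hodd h2
    rw [hNG]
    simp only [Matrix.of_apply]
    rcases Nat.even_or_odd (i:ℕ) with he | ho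
    · rw [if_neg (by rwa [Nat.not_odd_iff_even]), add_zero]
      rw [hG, Matrix.of_apply]
      exact ht_entry_even f he (l:ℕ)
    · rw [if_pos ho, hG, Matrix.of_apply]
      exact ht_entry_odd f hCc ho (l:ℕ)
  rw [leadingMinor, leadingMinor, hT, Matrix.det_mul, hdetE, one_mul]

theorem main_iff : ∀ n : ℕ, ∀ f : Polynomial ℝ, f.natDegree = n → 0 < f.coeff 0 →
    (Stb f ↔ ∀ j : ℕ, 1 ≤ j → j ≤ n + 1 → 0 < leadingMinor (HurwitzMatrix f) j) := by
  intro n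
  induction n using Nat.strong_induction_on with
  | _ n ih =>
    intro f hdeg ha0
    rcases Nat.eq_zero_or_pos n with rfl | hn
    · constructor
      · intro _ j hj1 hj2
        have hj : j = 1 := by omega
        subst hj
        rw [leadingMinor_one, hurwitz_00]
        exact ha0
      · intro _ z hz
        exfalso
        have hfC : f = C (f.coeff 0) := eq_C_of_natDegree_eq_zero hdeg
        rw [hfC, aeval_C] at hz
        exact ha0.ne' ((_root_.map_eq_zero (algebraMap ℝ ℂ)).mp hz)
    · have hf : f ≠ 0 := fun h => by simp [h] at ha0
      have hn1 : 1 ≤ f.natDegree := hdeg ▸ hn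
      have hd2 : leadingMinor (HurwitzMatrix f) 2 = f.coeff 0 * f.coeff 1 := by
        rw [show (2:ℕ) = 1 + 1 from rfl, minor_expand, leadingMinor_one, ht_00]
      constructor
      · intro hstb
        have ha1 : 0 < f.coeff 1 := stable_coeff_one_pos hstb ha0 hn1
        have hCc : Cc f * f.coeff 1 = f.coeff 0 := div_mul_cancel₀ _ ha1.ne'
        have hstbg : Stb (reduce f) := forward_stability hn1 hstb ha0 ha1
        have hdegg : (reduce f).natDegree = n - 1 := by rw [natDegree_reduce f hn1 hf, hdeg]
        have hg0 : 0 < (reduce f).coeff 0 := by rw [coeff_reduce_zero]; exact ha1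
        have ihg := (ih (n-1) (by omega) (reduce f) hdegg hg0).mp hstbg
        intro j hj1 hj2
        rcases j with _ | j'
        · omega
        rw [minor_expand, minor_shift f hCc]
        rcases Nat.eq_zero_or_pos j' with rfl | hj'
        · rw [leadingMinor_zero]
          simpa using ha0
        · exact mul_pos ha0 (ihg j' hj' (by omega))
      · intro hmin
        have h2 := hmin 2 (by omega) (by omega)
        rw [hd2] at h2
        have ha1 : 0 < f.coeff 1 := by
          rcases mul_pos_iff.mp h2 with ⟨-, h⟩ | ⟨h, -⟩
          · exact h
          · linarith
        have hCc : Cc f * f.coeff 1 = f.coeff 0 := div_mul_cancel₀ _ ha1.ne'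
        have hdegg : (reduce f).natDegree = n - 1 := by rw [natDegree_reduce f hn1 hf, hdeg]
        have hg0 : 0 < (reduce f).coeff 0 := by rw [coeff_reduce_zero]; exact ha1
        have hstbg : Stb (reduce f) := by
          apply (ih (n-1) (by omega) (reduce f) hdegg hg0).mpr
          intro j hj1 hj2
          have h3 := hmin (j+1) (by omega) (by omega)
          rw [minor_expand, minor_shift f hCc] at h3
          rcases mul_pos_iff.mp h3 with ⟨-, h⟩ | ⟨h, -⟩
          · exact h
          · linarith
        exact converse_stability hstbg (div_pos ha0 ha1)
          (aeval_evenPart (reduce f)) (reduce_identity f ha1.ne') ha0.ne'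

end StmtAux
end StmtAux

theorem stmt15 (f : Polynomial ℝ) (n : ℕ) (hdeg : f.natDegree = n)
    (hf0 : 0 < f.eval 0) :
    (∀ z : ℂ, Polynomial.aeval z f = 0 → z.re < 0) ↔
      ∀ j : ℕ, 1 ≤ j → j ≤ n + 1 → 0 < leadingMinor (HurwitzMatrix f) j := by
  exact StmtAux.main_iff n f hdeg (by rw [Polynomial.coeff_zero_eq_eval_zero]; exact hf0)
end

section
/- Let g be a real polynomial, x₀ ∈ ℝ, r ∈ ℝ, and suppose g(x) − r = (x − x₀)^k·h(x) with h(x₀) ≠ 0 and k > 1. Then g takes real values at some non-real complex points; more precisely, for every neighborhood U of x₀ in ℂ there exists z ∈ U with Im z ≠ 0 and g(z) ∈ ℝ. -/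
open Polynomial
set_option maxHeartbeats 1000000

theorem stmt19 (g h : Polynomial ℝ) (x₀ r : ℝ) (k : ℕ) (hk : 1 < k)
    (hfac : g - Polynomial.C r = (Polynomial.X - Polynomial.C x₀) ^ k * h)
    (hh : h.eval x₀ ≠ 0) :
    ∀ U ∈ nhds (x₀ : ℂ), ∃ z ∈ U, z.im ≠ 0 ∧ (Polynomial.aeval z g).im = 0 := by
  intro U hU
  set c := h.eval x₀ with hc
  have hkR : (2:ℝ) ≤ (k:ℝ) := by exact_mod_cast hk
  have hkpos : (0:ℝ) < (k:ℝ) := by linarith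
  -- continuity of Re (h(z))
  have hcont : Continuous fun z : ℂ => ((Polynomial.aeval z h : ℂ)).re :=
    Complex.continuous_re.comp (Polynomial.continuous_aeval h)
  have hval : ((Polynomial.aeval (x₀:ℂ) h : ℂ)).re = c := by
    rw [aeval_def, ← Complex.coe_algebraMap, Polynomial.eval₂_at_apply]
    simp [hc]
  -- a neighborhood where |Re h(z) - c| < |c|
  have hopen : IsOpen {z : ℂ | |((Polynomial.aeval z h : ℂ)).re - c| < |c|} :=
    isOpen_lt ((hcont.sub continuous_const).abs) continuous_const
  have hmem : (x₀:ℂ) ∈ {z : ℂ | |((Polynomial.aeval z h : ℂ)).re - c| < |c|} := by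
    simp [hval, abs_pos.mpr hh]
  obtain ⟨δ, hδpos, hδ⟩ := Metric.mem_nhds_iff.mp (hopen.mem_nhds hmem)
  obtain ⟨ρ, hρpos, hρ⟩ := Metric.mem_nhds_iff.mp hU
  set ε := min δ ρ / 2 with hε
  have hεpos : 0 < ε := by positivity
  have hεδ : ε < δ := by
    have := min_le_left δ ρ; simp only [hε]; linarith
  have hερ : ε < ρ := by
    have := min_le_right δ ρ; simp only [hε]; linarith
  -- the circle parametrization
  set zf : ℝ → ℂ := fun θ => (x₀:ℂ) + (ε:ℂ) * Complex.exp (θ * Complex.I) with hzf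
  have hdist : ∀ θ : ℝ, dist (zf θ) (x₀:ℂ) = ε := by
    intro θ
    simp only [hzf, Complex.dist_eq, add_sub_cancel_left, norm_mul,
      Complex.norm_exp_ofReal_mul_I, Complex.norm_real, Real.norm_eq_abs, mul_one]
    exact abs_of_pos hεpos
  set W : ℝ → ℂ := fun θ => Polynomial.aeval (zf θ) h with hWdef
  have hW : ∀ θ : ℝ, |(W θ).re - c| < |c| := by
    intro θ
    have : zf θ ∈ Metric.ball (x₀:ℂ) δ := by
      simp [Metric.mem_ball, hdist θ, hεδ]
    exact hδ this
  have hsign : ∀ θ : ℝ, 0 < c * (W θ).re := by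
    intro θ
    have h1 := abs_sub_lt_iff.mp (hW θ)
    rcases hh.lt_or_gt with hcneg | hcpos
    · have habs : |c| = -c := abs_of_neg hcneg
      nlinarith [h1.1, h1.2]
    · have habs : |c| = c := abs_of_pos hcpos
      nlinarith [h1.1, h1.2]
  -- the key algebraic identity
  have key : ∀ z : ℂ, (Polynomial.aeval z g : ℂ) = (r:ℂ) + (z - (x₀:ℂ))^k * Polynomial.aeval z h := by
    intro z
    have h2 := congrArg (Polynomial.aeval z) hfac
    simp only [map_sub, map_mul, map_pow, aeval_X, aeval_C, Complex.coe_algebraMap] at h2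
    linear_combination h2
  -- formula for the imaginary part along the circle
  have hf : ∀ θ : ℝ, (Polynomial.aeval (zf θ) g : ℂ).im
      = ε^k * (Real.cos ((k:ℝ)*θ) * (W θ).im + Real.sin ((k:ℝ)*θ) * (W θ).re) := by
    intro θ
    rw [key]
    have hz : zf θ - (x₀:ℂ) = (ε:ℂ) * Complex.exp ((θ:ℂ) * Complex.I) := by
      simp [hzf]
    rw [hz, mul_pow, ← Complex.exp_nat_mul]
    have h3 : (k:ℂ) * ((θ:ℂ) * Complex.I) = (((k:ℝ)*θ : ℝ):ℂ) * Complex.I := by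
      push_cast; ring
    rw [h3]
    have h4 : ((ε:ℂ))^k = ((ε^k : ℝ) : ℂ) := by push_cast; ring
    rw [h4]
    simp only [Complex.add_im, Complex.ofReal_im, Complex.mul_im, Complex.mul_re,
      Complex.ofReal_re, Complex.exp_ofReal_mul_I_re, Complex.exp_ofReal_mul_I_im]
    ring
  -- the two test angles
  set θ₁ : ℝ := Real.pi / (2*(k:ℝ)) with hθ₁
  set θ₂ : ℝ := 3*Real.pi / (2*(k:ℝ)) with hθ₂
  have hπ := Real.pi_pos
  have hθ₁pos : 0 < θ₁ := by positivity
  have hθ12 : θ₁ ≤ θ₂ := by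
    rw [hθ₁, hθ₂]
    apply div_le_div_of_nonneg_right (by linarith) (by positivity) |>.trans_eq rfl
  have hθ₂lt : θ₂ < Real.pi := by
    rw [hθ₂, div_lt_iff₀ (by positivity)]
    nlinarith
  have hkθ₁ : (k:ℝ) * θ₁ = Real.pi / 2 := by
    rw [hθ₁]; field_simp
  have hkθ₂ : (k:ℝ) * θ₂ = Real.pi + Real.pi / 2 := by
    rw [hθ₂]; field_simp; ring
  have hf1 : (Polynomial.aeval (zf θ₁) g : ℂ).im = ε^k * (W θ₁).re := by
    rw [hf θ₁, hkθ₁]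
    simp [Real.cos_pi_div_two, Real.sin_pi_div_two]
  have hf2 : (Polynomial.aeval (zf θ₂) g : ℂ).im = -(ε^k * (W θ₂).re) := by
    rw [hf θ₂, hkθ₂, Real.sin_add, Real.cos_add]
    simp [Real.sin_pi, Real.cos_pi, Real.sin_pi_div_two, Real.cos_pi_div_two]
  -- continuity of the imaginary part along the circle
  have hzfc : Continuous zf := by
    apply continuous_const.add
    apply continuous_const.mul
    exact Complex.continuous_exp.comp (Complex.continuous_ofReal.mul continuous_const)
  have hfc : Continuous fun θ : ℝ => (Polynomial.aeval (zf θ) g : ℂ).im :=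
    Complex.continuous_im.comp ((Polynomial.continuous_aeval g).comp hzfc)
  -- 0 is between the two values
  have hεk : 0 < ε^k := by positivity
  have h0mem : (0:ℝ) ∈ Set.uIcc ((Polynomial.aeval (zf θ₁) g : ℂ).im)
      ((Polynomial.aeval (zf θ₂) g : ℂ).im) := by
    rw [hf1, hf2, Set.mem_uIcc]
    have s1 := hsign θ₁
    have s2 := hsign θ₂
    rcases hh.lt_or_gt with hcneg | hcpos
    · left
      constructor
      · nlinarith
      · nlinarith
    · right
      constructor
      · nlinarith
      · nlinarith
  have hsub := intermediate_value_uIcc (f := fun θ : ℝ => (Polynomial.aeval (zf θ) g : ℂ).im)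
    (a := θ₁) (b := θ₂) hfc.continuousOn
  obtain ⟨θs, hθsmem, hθseq⟩ := hsub h0mem
  rw [Set.uIcc_of_le hθ12] at hθsmem
  refine ⟨zf θs, ?_, ?_, hθseq⟩
  · apply hρ
    simp [Metric.mem_ball, hdist θs, hερ]
  · have him : (zf θs).im = ε * Real.sin θs := by
      simp [hzf, Complex.add_im, Complex.mul_im, Complex.exp_ofReal_mul_I_re,
        Complex.exp_ofReal_mul_I_im]
    rw [him]
    have hsinpos : 0 < Real.sin θs :=
      Real.sin_pos_of_pos_of_lt_pi (lt_of_lt_of_le hθ₁pos hθsmem.1)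
        (lt_of_le_of_lt hθsmem.2 hθ₂lt)
    positivity
end
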